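/- arXiv:2004.07996 — 5 statements merged into one kernel-verified Lean document; each statement's English description precedes it below -/
import Mathlib

section
/- Let n ≥ 2, let p : Fin n → ℝ² be in counterclockwise convex position, and let σ : Fin n → Fin n be a bijection whose spanning path on p is noncrossing. Then for every t with 1 ≤ t ≤ n, the set {σ 0, σ 1, …, σ (t−1)} is a cyclic arc of Fin n; moreover, if t < n, then σ (t−1) is an endpoint of this arc (i.e., removing σ (t−1) from the set again yields a cyclic arc). -/
/-- Signed area determinant of two vectors in the plane. -/
def det2 (u v : ℝ × ℝ) : ℝ := u.1 * v.2 - u.2 * v.1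

/-- `p` lists points in counterclockwise convex position. -/
def CCWConvex {n : ℕ} (p : Fin n → ℝ × ℝ) : Prop :=
  ∀ i j k : Fin n, i < j → j < k → 0 < det2 (p j - p i) (p k - p i)

/-- The path visiting `f 0, f 1, …` is noncrossing: consecutive edges meet exactly at
their shared vertex, and nonconsecutive edges are disjoint. -/
def NoncrossingPath {m : ℕ} (f : Fin m → ℝ × ℝ) : Prop :=
  ∀ k l : ℕ, ∀ hk : k + 1 < m, ∀ hl : l + 1 < m, k < l →
    if l = k + 1 then
      segment ℝ (f ⟨k, by omega⟩) (f ⟨k + 1, hk⟩) ∩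
        segment ℝ (f ⟨l, by omega⟩) (f ⟨l + 1, hl⟩) = {f ⟨k + 1, hk⟩}
    else
      Disjoint (segment ℝ (f ⟨k, by omega⟩) (f ⟨k + 1, hk⟩))
        (segment ℝ (f ⟨l, by omega⟩) (f ⟨l + 1, hl⟩))

/-- `A` is a cyclic arc of `Fin n`: a set of the form `{i, i+1, …, i+t-1}` (mod `n`). -/
def IsArc {n : ℕ} (A : Set (Fin n)) : Prop :=
  ∃ i t : ℕ, t ≤ n ∧ ∀ x : Fin n, x ∈ A ↔ ∃ r < t, (x : ℕ) = (i + r) % n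

lemma seg_cross (a b c d : ℝ × ℝ)
    (h2 : det2 (c - a) (b - a) < 0) (h1 : 0 < det2 (c - a) (d - a))
    (h3 : 0 < det2 (d - b) (a - b)) (h4 : det2 (d - b) (c - b) < 0) :
    (segment ℝ a c ∩ segment ℝ b d).Nonempty := by
  set α := det2 (d - b) (a - b) with hα
  set γ := det2 (d - b) (c - b) with hγ
  set Lb := det2 (c - a) (b - a) with hLb
  set Ld := det2 (c - a) (d - a) with hLd
  have hD : α - γ = Ld - Lb := by
    simp only [hα, hγ, hLb, hLd, det2, Prod.fst_sub, Prod.snd_sub]; ring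
  have hDpos : 0 < α - γ := by linarith
  have hne : α - γ ≠ 0 := ne_of_gt hDpos
  refine ⟨((α - γ)⁻¹ * (-γ)) • a + ((α - γ)⁻¹ * α) • c, ?_, ?_⟩
  · exact ⟨_, _, mul_nonneg (by positivity) (by linarith),
      mul_nonneg (by positivity) (by linarith), by field_simp; ring, rfl⟩
  · refine ⟨(α - γ)⁻¹ * Ld, (α - γ)⁻¹ * (-Lb),
      mul_nonneg (by positivity) (by linarith),
      mul_nonneg (by positivity) (by linarith),
      by rw [hD] at hne ⊢; field_simp; ring, ?_⟩
    have key : Ld • b + (-Lb) • d = (-γ) • a + α • c := by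
      apply Prod.ext <;>
        simp only [hα, hγ, hLb, hLd, det2, Prod.smul_fst, Prod.smul_snd, Prod.fst_add,
          Prod.snd_add, Prod.fst_sub, Prod.snd_sub, smul_eq_mul] <;> ring
    rw [mul_smul, mul_smul, ← smul_add, key, smul_add, ← mul_smul, ← mul_smul]

lemma orient_cyc (a b c : ℝ × ℝ) : det2 (b - a) (c - a) = det2 (c - b) (a - b) := by
  simp only [det2, Prod.fst_sub, Prod.snd_sub]; ring

lemma orient_swap (a b c : ℝ × ℝ) : det2 (b - a) (c - a) = - det2 (c - a) (b - a) := by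
  simp only [det2, Prod.fst_sub, Prod.snd_sub]; ring

lemma cross_base {n : ℕ} {p : Fin n → ℝ × ℝ} (hp : CCWConvex p) {a b c d : Fin n}
    (hab : a < b) (hbc : b < c) (hcd : c < d) :
    (segment ℝ (p a) (p c) ∩ segment ℝ (p b) (p d)).Nonempty := by
  apply seg_cross
  · have := hp a b c hab hbc; rw [orient_swap] at this; linarith
  · exact hp a c d (hab.trans hbc) hcd
  · have := hp a b d hab (hbc.trans hcd)
    rw [orient_cyc] at this; exact this
  · have := hp b c d hbc hcd; rw [orient_swap] at this; linarith

lemma cross_cyclic {n : ℕ} {p : Fin n → ℝ × ℝ} (hp : CCWConvex p) {a b c d : Fin n}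
    {β oa ob oc od : ℕ} (h1 : oa < ob) (h2 : ob < oc) (h3 : oc < od) (h4 : od < n)
    (ha : (a : ℕ) = (β + oa) % n) (hb : (b : ℕ) = (β + ob) % n)
    (hc : (c : ℕ) = (β + oc) % n) (hd : (d : ℕ) = (β + od) % n) :
    (segment ℝ (p a) (p c) ∩ segment ℝ (p b) (p d)).Nonempty := by
  have hn : 0 < n := by omega
  set m := β % n with hm
  have hmn : m < n := Nat.mod_lt _ hn
  have val : ∀ o : ℕ, o < n → (β + o) % n = if m + o < n then m + o else m + o - n := by
    intro o ho
    rw [Nat.add_mod, ← hm, Nat.mod_eq_of_lt ho]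
    split
    · exact Nat.mod_eq_of_lt (by omega)
    · rw [Nat.mod_eq_sub_mod (by omega), Nat.mod_eq_of_lt (by omega)]
  rw [val oa (by omega)] at ha
  rw [val ob (by omega)] at hb
  rw [val oc (by omega)] at hc
  rw [val od h4] at hd
  have flt : ∀ x y : Fin n, (x : ℕ) < (y : ℕ) → x < y := fun x y h => h
  rcases lt_or_ge (m + od) n with Hd | Hd
  · rw [if_pos (by omega : m + oa < n)] at ha
    rw [if_pos (by omega : m + ob < n)] at hb
    rw [if_pos (by omega : m + oc < n)] at hc
    rw [if_pos Hd] at hd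
    exact cross_base hp (flt a b (by omega)) (flt b c (by omega)) (flt c d (by omega))
  rcases lt_or_ge (m + oc) n with Hc | Hc
  · rw [if_pos (by omega : m + oa < n)] at ha
    rw [if_pos (by omega : m + ob < n)] at hb
    rw [if_pos Hc] at hc
    rw [if_neg (by omega)] at hd
    have := cross_base hp (flt d a (by omega)) (flt a b (by omega)) (flt b c (by omega))
    rw [Set.inter_comm, segment_symm ℝ (p d) (p b)] at this
    exact this
  rcases lt_or_ge (m + ob) n with Hb | Hb
  · rw [if_pos (by omega : m + oa < n)] at ha
    rw [if_pos Hb] at hb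
    rw [if_neg (by omega)] at hc
    rw [if_neg (by omega)] at hd
    have := cross_base hp (flt c d (by omega)) (flt d a (by omega)) (flt a b (by omega))
    rw [segment_symm ℝ (p c) (p a), segment_symm ℝ (p d) (p b)] at this
    exact this
  rcases lt_or_ge (m + oa) n with Ha | Ha
  · rw [if_pos Ha] at ha
    rw [if_neg (by omega)] at hb
    rw [if_neg (by omega)] at hc
    rw [if_neg (by omega)] at hd
    have := cross_base hp (flt b c (by omega)) (flt c d (by omega)) (flt d a (by omega))
    rw [Set.inter_comm, segment_symm ℝ (p c) (p a)] at this
    exact this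
  · rw [if_neg (by omega)] at ha
    rw [if_neg (by omega)] at hb
    rw [if_neg (by omega)] at hc
    rw [if_neg (by omega)] at hd
    exact cross_base hp (flt a b (by omega)) (flt b c (by omega)) (flt c d (by omega))

lemma mod_inj {n i r1 r2 : ℕ} (h1 : r1 < n) (h2 : r2 < n)
    (h : (i + r1) % n = (i + r2) % n) : r1 = r2 := by
  have h' : i + r1 ≡ i + r2 [MOD n] := h
  have h'' : r1 ≡ r2 [MOD n] := (Nat.ModEq.refl i).add_left_cancel h'
  have h3 : r1 % n = r2 % n := h''
  rwa [Nat.mod_eq_of_lt h1, Nat.mod_eq_of_lt h2] at h3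

lemma exists_offset {n : ℕ} (hn : 0 < n) (i : ℕ) (x : Fin n) :
    ∃ r < n, (x : ℕ) = (i + r) % n := by
  have hinj : Function.Injective
      (fun r : Fin n => (⟨(i + (r : ℕ)) % n, Nat.mod_lt _ hn⟩ : Fin n)) := by
    intro r1 r2 h
    exact Fin.ext (mod_inj r1.isLt r2.isLt (congrArg Fin.val h))
  obtain ⟨r, hr⟩ := Finite.surjective_of_injective hinj x
  exact ⟨r, r.isLt, (congrArg Fin.val hr).symm⟩

lemma ivt_nat (f : ℕ → Prop) (a b j1 j2 : ℕ) (ha1 : a ≤ j1) (hb1 : j1 ≤ b) (ha2 : a ≤ j2)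
    (hb2 : j2 ≤ b) (h1 : f j1) (h2 : ¬ f j2) :
    ∃ l, a ≤ l ∧ l < b ∧ ¬ (f l ↔ f (l + 1)) := by
  by_contra hcon
  push_neg at hcon
  have chain : ∀ d k, a ≤ k → k + d ≤ b → (f k ↔ f (k + d)) := by
    intro d
    induction d with
    | zero => simp
    | succ d ih =>
      intro k hk hkd
      have e1 := ih k hk (by omega)
      have e2 := hcon (k + d) (by omega) (by omega)
      rw [show k + (d + 1) = k + d + 1 by omega]
      exact e1.trans e2
  rcases le_total j1 j2 with h | h
  · have := (chain (j2 - j1) j1 ha1 (by omega)).mp h1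
    rw [show j1 + (j2 - j1) = j2 by omega] at this
    exact h2 this
  · have e := chain (j1 - j2) j2 ha2 (by omega)
    rw [show j2 + (j1 - j2) = j1 by omega] at e
    exact h2 (e.mpr h1)

lemma key {n : ℕ} (hn : 2 ≤ n) (p : Fin n → ℝ × ℝ) (hp : CCWConvex p)
    (σ : Equiv.Perm (Fin n)) (hσ : NoncrossingPath (p ∘ σ)) :
    ∀ t : ℕ, 1 ≤ t → ∀ ht : t ≤ n,
      ∃ i : ℕ,
        (∀ x : Fin n, x ∈ ⇑σ '' {k : Fin n | (k : ℕ) < t} ↔ ∃ r < t, (x : ℕ) = (i + r) % n) ∧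
        ((σ ⟨t - 1, by omega⟩ : ℕ) = i % n ∨ (σ ⟨t - 1, by omega⟩ : ℕ) = (i + (t - 1)) % n) := by
  have hn0 : 0 < n := by omega
  intro t ht1
  induction t, ht1 using Nat.le_induction with
  | base =>
    intro _
    refine ⟨(σ ⟨0, hn0⟩ : ℕ), fun x => ?_, Or.inl ?_⟩
    · constructor
      · rintro ⟨k, hk, rfl⟩
        have hk0 : k = ⟨0, hn0⟩ := Fin.ext (by simpa using hk)
        exact ⟨0, by omega, by
          rw [hk0, Nat.add_zero, Nat.mod_eq_of_lt (σ ⟨0, hn0⟩).isLt]⟩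
      · rintro ⟨r, hr, hx⟩
        have hr0 : r = 0 := by omega
        subst hr0
        rw [Nat.add_zero, Nat.mod_eq_of_lt (σ ⟨0, hn0⟩).isLt] at hx
        exact ⟨⟨0, hn0⟩, by simp, (Fin.ext hx).symm⟩
    · rw [Nat.mod_eq_of_lt (σ ⟨0, hn0⟩).isLt]
  | succ t ht1 ih =>
    intro ht
    obtain ⟨i, himg, hend⟩ := ih (by omega)
    set s : Fin n := σ ⟨t, by omega⟩ with hs
    obtain ⟨m', hm'n, hsval⟩ := exists_offset hn0 i s
    -- s is not in the prefix
    have hnotmem : ∀ j : Fin n, t ≤ (j : ℕ) → σ j ∉ ⇑σ '' {k : Fin n | (k : ℕ) < t} := by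
      rintro j hj ⟨k, hk, hkj⟩
      have hkj2 : k = j := σ.injective hkj
      have hk2 : (k : ℕ) < t := hk
      have hk3 : (k : ℕ) = (j : ℕ) := congrArg Fin.val hkj2
      omega
    have hm't : t ≤ m' := by
      by_contra hcon
      exact hnotmem ⟨t, by omega⟩ (le_refl t) ((himg s).mpr ⟨m', by omega, hsval⟩)
    -- main dichotomy
    have hdich : m' = t ∨ m' = n - 1 := by
      by_contra hcon
      push_neg at hcon
      obtain ⟨hm1, hm2⟩ := hcon
      have hmlb : t + 1 ≤ m' := by omega
      have hmub : m' ≤ n - 2 := by omega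
      -- X1 : offsets t..m'-1 ; X2 : offsets m'+1..n-1
      set X1 : Set (Fin n) := {x | ∃ r, t + r < m' ∧ (x : ℕ) = (i + t + r) % n} with hX1
      set X2 : Set (Fin n) := {x | ∃ r, m' + 1 + r < n ∧ (x : ℕ) = (i + m' + 1 + r) % n} with hX2
      -- every later vertex is in X1 ∪ X2
      have hlater : ∀ j : ℕ, t + 1 ≤ j → ∀ hjn : j < n, σ ⟨j, hjn⟩ ∈ X1 ∪ X2 := by
        intro j hj hjn
        obtain ⟨r, hrn, hrval⟩ := exists_offset hn0 i (σ ⟨j, hjn⟩)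
        have hrt : t ≤ r := by
          by_contra hcon2
          exact hnotmem ⟨j, hjn⟩ (by show t ≤ j; omega) ((himg _).mpr ⟨r, by omega, hrval⟩)
        have hrm : r ≠ m' := by
          intro hre
          subst hre
          have hxe : σ ⟨j, hjn⟩ = s := Fin.ext (by rw [hrval, hsval])
          rw [hs] at hxe
          have hje := σ.injective hxe
          have hje2 : j = t := congrArg Fin.val hje
          omega
        rcases lt_or_ge r m' with hlt | hge
        · exact Or.inl ⟨r - t, by omega, by rw [show i + t + (r - t) = i + r by omega]; exact hrval⟩
        · exact Or.inr ⟨r - m' - 1, by omega,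
            by rw [show i + m' + 1 + (r - m' - 1) = i + r by omega]; exact hrval⟩
      -- find witnesses for X1 and X2 among later positions
      have hwit : ∀ v : ℕ, v < n → (∀ r < t, v ≠ (i + r) % n) → v ≠ (i + m') % n →
          ∃ j : ℕ, t + 1 ≤ j ∧ j ≤ n - 1 ∧ ∃ hjn : j < n, (σ ⟨j, hjn⟩ : ℕ) = v := by
        intro v hv hv1 hv2
        set x : Fin n := ⟨v, hv⟩ with hx
        set j : Fin n := σ.symm x with hj
        have hσj : σ j = x := σ.apply_symm_apply x
        have hjt : t + 1 ≤ (j : ℕ) := by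
          rcases lt_or_ge (j : ℕ) t with hlt | hge
          · exfalso
            have : x ∈ ⇑σ '' {k : Fin n | (k : ℕ) < t} := ⟨j, hlt, hσj⟩
            obtain ⟨r, hrt, hrv⟩ := (himg x).mp this
            exact hv1 r hrt hrv
          · rcases Nat.eq_or_lt_of_le hge with heq | hlt
            · exfalso
              have hjt' : j = (⟨t, by omega⟩ : Fin n) := Fin.ext heq.symm
              have h1 : (x : ℕ) = (s : ℕ) := by rw [← hσj, hjt', hs]
              exact hv2 (h1.trans hsval)
            · omega
        exact ⟨(j : ℕ), hjt, by omega, j.isLt, congrArg Fin.val hσj⟩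
      obtain ⟨j1, hj1a, hj1b, hj1n, hj1v⟩ := hwit ((i + t) % n) (Nat.mod_lt _ hn0)
        (fun r hr hee => by
          have := mod_inj (show t < n by omega) (show r < n by omega) hee
          omega)
        (fun hee => by
          have := mod_inj (show t < n by omega) (show m' < n by omega) hee
          omega)
      obtain ⟨j2, hj2a, hj2b, hj2n, hj2v⟩ := hwit ((i + m' + 1) % n) (Nat.mod_lt _ hn0)
        (fun r hr hee => by
          have hee' : (i + (m' + 1)) % n = (i + r) % n := by
            rw [show i + (m' + 1) = i + m' + 1 from by omega]; exact hee
          have := mod_inj (show m' + 1 < n by omega) (show r < n by omega) hee'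
          omega)
        (fun hee => by
          have hee' : (i + (m' + 1)) % n = (i + m') % n := by
            rw [show i + (m' + 1) = i + m' + 1 from by omega]; exact hee
          have := mod_inj (show m' + 1 < n by omega) (show m' < n by omega) hee'
          omega)
      -- discrete IVT to find an edge from X1 to X2
      set f : ℕ → Prop := fun j => ∃ hjn : j < n, σ ⟨j, hjn⟩ ∈ X1 with hf
      have hfj1 : f j1 := ⟨hj1n, 0, by omega, by
        show _ = (i + t + 0) % n
        rw [Nat.add_zero]; exact hj1v⟩
      have hfj2 : ¬ f j2 := by
        rintro ⟨hjn, r, hr, hvv⟩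
        have hvv' : (i + m' + 1) % n = (i + t + r) % n := by
          rw [← hvv]
          have : (⟨j2, hjn⟩ : Fin n) = ⟨j2, hj2n⟩ := rfl
          rw [this, hj2v]
        have hvv'' : (i + (m' + 1)) % n = (i + (t + r)) % n := by
          rw [show i + (m' + 1) = i + m' + 1 from by omega,
            show i + (t + r) = i + t + r from by omega]
          exact hvv'
        have := mod_inj (show m' + 1 < n by omega) (show t + r < n by omega) hvv''
        omega
      obtain ⟨l, hla, hlb, hliff⟩ := ivt_nat f (t + 1) (n - 1) j1 j2 hj1a hj1b hj2a hj2b hfj1 hfj2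
      have hln : l < n := by omega
      have hl1n : l + 1 < n := by omega
      have hUl := hlater l (by omega) hln
      have hUl1 := hlater (l + 1) (by omega) hl1n
      -- extract x ∈ X1 and y ∈ X2 among σ l, σ (l+1)
      have hxy : ∃ x y : Fin n, x ∈ X1 ∧ y ∈ X2 ∧
          segment ℝ (p (σ ⟨l, hln⟩)) (p (σ ⟨l + 1, hl1n⟩)) = segment ℝ (p x) (p y) := by
        by_cases hfl : f l
        · have hfl1 : ¬ f (l + 1) := fun h => hliff (iff_of_true hfl h)
          obtain ⟨hjn, hmem⟩ := hfl
          have hx1 : σ ⟨l, hln⟩ ∈ X1 := hmem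
          have hy2 : σ ⟨l + 1, hl1n⟩ ∈ X2 := by
            rcases hUl1 with h | h
            · exact absurd ⟨hl1n, h⟩ hfl1
            · exact h
          exact ⟨_, _, hx1, hy2, rfl⟩
        · have hfl1 : f (l + 1) := by
            by_contra h
            exact hliff (iff_of_false hfl h)
          obtain ⟨hjn, hmem⟩ := hfl1
          have hx1 : σ ⟨l + 1, hl1n⟩ ∈ X1 := hmem
          have hy2 : σ ⟨l, hln⟩ ∈ X2 := by
            rcases hUl with h | h
            · exact absurd ⟨hln, h⟩ hfl
            · exact h
          exact ⟨_, _, hx1, hy2, segment_symm ℝ _ _⟩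
      obtain ⟨x, y, ⟨rx, hrx, hxv⟩, ⟨ry, hry, hyv⟩, hseg⟩ := hxy
      -- crossing of edge (t-1,t) with edge (l,l+1)
      have hcross : (segment ℝ (p (σ ⟨t - 1, by omega⟩)) (p s) ∩
          segment ℝ (p x) (p y)).Nonempty := by
        rcases hend with he | he
        · refine cross_cyclic hp (a := σ ⟨t - 1, by omega⟩) (b := x) (c := s) (d := y)
            (β := i) (oa := 0) (ob := t + rx) (oc := m')
            (od := m' + 1 + ry) (by omega) (by omega) (by omega) (by omega)
            ?_ ?_ ?_ ?_
          · simpa using he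
          · rw [show i + (t + rx) = i + t + rx from by omega]; exact hxv
          · exact hsval
          · rw [show i + (m' + 1 + ry) = i + m' + 1 + ry from by omega]; exact hyv
        · refine cross_cyclic hp (a := σ ⟨t - 1, by omega⟩) (b := x) (c := s) (d := y)
            (β := i + (t - 1)) (oa := 0) (ob := 1 + rx)
            (oc := m' - (t - 1)) (od := m' - (t - 1) + 1 + ry)
            (by omega) (by omega) (by omega) (by omega) ?_ ?_ ?_ ?_
          · simpa using he
          · rw [show i + (t - 1) + (1 + rx) = i + t + rx from by omega]; exact hxv
          · rw [show i + (t - 1) + (m' - (t - 1)) = i + m' from by omega]; exact hsval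
          · rw [show i + (t - 1) + (m' - (t - 1) + 1 + ry) = i + m' + 1 + ry from by omega]
            exact hyv
      have H := hσ (t - 1) l (by omega) (by omega) (by omega)
      rw [if_neg (by omega : ¬ l = t - 1 + 1)] at H
      simp only [show t - 1 + 1 = t from by omega] at H
      apply Set.not_disjoint_iff_nonempty_inter.mpr _ H
      show (segment ℝ (p (σ ⟨t - 1, by omega⟩)) (p (σ ⟨t, by omega⟩)) ∩
        segment ℝ (p (σ ⟨l, hln⟩)) (p (σ ⟨l + 1, hl1n⟩))).Nonempty
      rw [hseg]
      exact hcross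
    -- now use the dichotomy to build the arc for t + 1
    have himg1 : ∀ x : Fin n, x ∈ ⇑σ '' {k : Fin n | (k : ℕ) < t + 1} ↔
        (x ∈ ⇑σ '' {k : Fin n | (k : ℕ) < t} ∨ x = s) := by
      intro x
      constructor
      · rintro ⟨k, hk, rfl⟩
        have hk' : (k : ℕ) < t + 1 := hk
        rcases lt_or_ge (k : ℕ) t with h | h
        · exact Or.inl ⟨k, h, rfl⟩
        · have : k = ⟨t, by omega⟩ := Fin.ext (by show (k : ℕ) = t; omega)
          exact Or.inr (by rw [this, hs])
      · rintro (⟨k, hk, rfl⟩ | rfl)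
        · exact ⟨k, by show (k : ℕ) < t + 1; have : (k : ℕ) < t := hk; omega, rfl⟩
        · exact ⟨⟨t, by omega⟩, by show t < t + 1; omega, rfl⟩
    rcases hdich with hm | hm
    · subst hm
      refine ⟨i, fun x => ?_, Or.inr ?_⟩
      · rw [himg1 x, himg x]
        constructor
        · rintro (⟨r, hr, hv⟩ | rfl)
          · exact ⟨r, by omega, hv⟩
          · exact ⟨m', by omega, hsval⟩
        · rintro ⟨r, hr, hv⟩
          rcases lt_or_ge r m' with h | h
          · exact Or.inl ⟨r, h, hv⟩
          · have : r = m' := by omega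
            subst this
            exact Or.inr (Fin.ext (by rw [hv, hsval]))
      · simp only [Nat.add_sub_cancel]
        exact hsval
    · subst hm
      refine ⟨i + (n - 1), fun x => ?_, Or.inl ?_⟩
      · rw [himg1 x, himg x]
        constructor
        · rintro (⟨r, hr, hv⟩ | rfl)
          · refine ⟨r + 1, by omega, ?_⟩
            rw [show i + (n - 1) + (r + 1) = i + r + n from by omega, Nat.add_mod_right]
            exact hv
          · exact ⟨0, by omega, by rw [Nat.add_zero]; exact hsval⟩
        · rintro ⟨r, hr, hv⟩
          rcases Nat.eq_zero_or_pos r with h | h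
          · subst h
            rw [Nat.add_zero] at hv
            exact Or.inr (Fin.ext (by rw [hv, hsval]))
          · refine Or.inl ⟨r - 1, by omega, ?_⟩
            rw [show i + (n - 1) + r = i + (r - 1) + n from by omega, Nat.add_mod_right] at hv
            exact hv
      · simp only [Nat.add_sub_cancel]
        exact hsval

theorem prefix_of_noncrossing_path_is_arc {n : ℕ} (hn : 2 ≤ n)
    (p : Fin n → ℝ × ℝ) (hp : CCWConvex p)
    (σ : Equiv.Perm (Fin n)) (hσ : NoncrossingPath (p ∘ σ)) :
    ∀ t : ℕ, ∀ _ht1 : 1 ≤ t, ∀ _ht2 : t ≤ n,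
      IsArc (⇑σ '' {k : Fin n | (k : ℕ) < t}) ∧
      (∀ _ht3 : t < n,
        IsArc ((⇑σ '' {k : Fin n | (k : ℕ) < t}) \ {σ ⟨t - 1, by omega⟩})) := by
  intro t ht1 ht2
  obtain ⟨i, himg, -⟩ := key hn p hp σ hσ t ht1 ht2
  refine ⟨⟨i, t, ht2, himg⟩, ?_⟩
  intro ht3
  rcases Nat.eq_or_lt_of_le ht1 with h1 | h1
  · -- t = 1 : the difference is empty
    refine ⟨0, 0, by omega, fun x => ?_⟩
    simp only [Set.mem_diff, Set.mem_singleton_iff]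
    constructor
    · rintro ⟨⟨k, hk, rfl⟩, hne⟩
      exfalso
      apply hne
      have hkk : k = ⟨t - 1, by omega⟩ :=
        Fin.ext (by show (k : ℕ) = t - 1; have : (k : ℕ) < t := hk; omega)
      rw [hkk]
    · rintro ⟨r, hr, -⟩
      omega
  · -- t ≥ 2 : the difference is the prefix of length t - 1
    obtain ⟨i', himg', -⟩ := key hn p hp σ hσ (t - 1) (by omega) (by omega)
    refine ⟨i', t - 1, by omega, fun x => ?_⟩
    rw [← himg' x]
    simp only [Set.mem_diff, Set.mem_singleton_iff]
    constructor
    · rintro ⟨⟨k, hk, rfl⟩, hne⟩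
      refine ⟨k, ?_, rfl⟩
      show (k : ℕ) < t - 1
      have hk' : (k : ℕ) < t := hk
      rcases lt_or_ge (k : ℕ) (t - 1) with h | h
      · exact h
      · exfalso
        apply hne
        congr 1
        exact Fin.ext (by show (k : ℕ) = t - 1; omega)
    · rintro ⟨k, hk, rfl⟩
      have hk' : (k : ℕ) < t - 1 := hk
      refine ⟨⟨k, by show (k : ℕ) < t; omega, rfl⟩, ?_⟩
      intro heq
      have h2 := σ.injective heq
      have h3 : (k : ℕ) = t - 1 := congrArg Fin.val h2
      omega
end

section
/- Let n ≥ 2, let p : Fin n → ℝ² be in counterclockwise convex position, and let σ : Fin n → Fin n be a bijection whose spanning path на p is noncrossing. Let I = (i, i+1, …, i+t−1) (indices modulo n) be a cyclic arc such that neither the first label σ 0 nor the last label σ (n−1) of the path belongs to I. Then the labels of I appear along the path in the same order as along I or in the exactly reversed order; that is, either σ⁻¹(i) < σ⁻¹(i+1) < … < σ⁻¹(i+t−1) or σ⁻¹(i) > σ⁻¹(i+1) > … > σ⁻¹(i+t−1). -/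
/-- The point of `Fin n` with value `i` modulo `n`. -/
def arcPt (n : ℕ) (hn : 0 < n) (i : ℕ) : Fin n := ⟨i % n, Nat.mod_lt _ hn⟩

lemma det2_cycle (u v w : ℝ × ℝ) : det2 (v - u) (w - u) = det2 (w - v) (u - v) := by
  simp only [det2, Prod.fst_sub, Prod.snd_sub]; ring

/-- Diagonals of a CCW convex quadrilateral a,b,c,d meet. -/
lemma segs_meet (a b c d : ℝ × ℝ)
    (h1 : 0 < det2 (b - a) (c - a)) (h2 : 0 < det2 (b - a) (d - a))
    (h3 : 0 < det2 (c - a) (d - a)) (h4 : 0 < det2 (c - b) (d - b)) :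
    ∃ z, z ∈ segment ℝ a c ∧ z ∈ segment ℝ b d := by
  set A := det2 (b - a) (c - a) with hA
  set B := det2 (c - a) (d - a) with hB
  set C := det2 (b - a) (d - a) with hC
  set D := det2 (c - b) (d - b) with hD
  have hS : A + B = C + D := by
    simp only [hA, hB, hC, hD, det2, Prod.fst_sub, Prod.snd_sub]; ring
  have hABpos : 0 < A + B := by linarith
  refine ⟨b + (A / (A + B)) • (d - b), ?_, ?_⟩
  · have key : b + (A / (A + B)) • (d - b) = a + (C / (A + B)) • (c - a) := by
      have h0 : A + B ≠ 0 := ne_of_gt hABpos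
      apply Prod.ext
      · simp only [Prod.fst_add, Prod.smul_fst, Prod.fst_sub, smul_eq_mul]
        field_simp
        simp only [hA, hB, hC, det2, Prod.fst_sub, Prod.snd_sub]; ring
      · simp only [Prod.snd_add, Prod.smul_snd, Prod.snd_sub, smul_eq_mul]
        field_simp
        simp only [hA, hB, hC, det2, Prod.fst_sub, Prod.snd_sub]; ring
    rw [key, segment_eq_image']
    refine ⟨C / (A + B), ⟨?_, ?_⟩, rfl⟩
    · positivity
    · rw [div_le_one hABpos]; linarith
  · rw [segment_eq_image']
    refine ⟨A / (A + B), ⟨?_, ?_⟩, rfl⟩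
    · positivity
    · rw [div_le_one hABpos]; linarith

lemma arcPt_val {n : ℕ} (hn : 0 < n) (i : ℕ) : (arcPt n hn i : ℕ) = i % n := rfl

lemma arcPt_add_n {n : ℕ} (hn : 0 < n) (i : ℕ) : arcPt n hn (i + n) = arcPt n hn i := by
  apply Fin.ext; simp [arcPt_val, Nat.add_mod_right]

lemma arcPt_cancel {n : ℕ} (hn : 0 < n) {s r r' : ℕ} (hr : r < n) (hr' : r' < n)
    (h : arcPt n hn (s + r) = arcPt n hn (s + r')) : r = r' := by
  have h2 : (s + r) % n = (s + r') % n := by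
    have := congrArg (Fin.val) h; simpa [arcPt_val] using this
  have h3 : r % n = r' % n := Nat.ModEq.add_left_cancel' s h2
  rwa [Nat.mod_eq_of_lt hr, Nat.mod_eq_of_lt hr'] at h3

/-- offset of `x` from base `s`. -/
def off {n : ℕ} (s : ℕ) (x : Fin n) : ℕ := (x.val + (n - s % n)) % n

lemma off_lt {n : ℕ} (hn : 0 < n) (s : ℕ) (x : Fin n) : off s x < n := Nat.mod_lt _ hn

lemma arcPt_off {n : ℕ} (hn : 0 < n) (s : ℕ) (x : Fin n) : arcPt n hn (s + off s x) = x := by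
  apply Fin.ext
  rw [arcPt_val, off]
  have h1 : (s + (x.val + (n - s % n)) % n) % n = (s + (x.val + (n - s % n))) % n := by
    rw [Nat.add_mod, Nat.mod_mod_of_dvd _ dvd_rfl, ← Nat.add_mod]
  rw [h1]
  have h2 : s + (x.val + (n - s % n)) = (s - s % n) + n + x.val := by
    have hm : s % n < n := Nat.mod_lt _ hn
    have hd : n - s % n + s % n = n := Nat.sub_add_cancel (le_of_lt hm)
    have hle : s % n ≤ s := Nat.mod_le s n
    omega
  rw [h2]
  have h3 : s - s % n = n * (s / n) := by
    have hmd : s % n + n * (s / n) = s := Nat.mod_add_div s n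
    omega
  rw [h3]
  have h4 : n * (s / n) + n + x.val = x.val + (s / n + 1) * n := by ring
  rw [h4, Nat.add_mul_mod_self_right, Nat.mod_eq_of_lt x.isLt]

lemma off_arcPt {n : ℕ} (hn : 0 < n) (s r : ℕ) (hr : r < n) : off s (arcPt n hn (s + r)) = r := by
  have h := arcPt_off hn s (arcPt n hn (s + r))
  exact arcPt_cancel hn (off_lt hn s _) hr h

/-- convex position along cyclic offsets from a base. -/
lemma ccw_offsets {n : ℕ} (hn : 0 < n) {p : Fin n → ℝ × ℝ} (hp : CCWConvex p)
    (s : ℕ) {a b c : ℕ} (hab : a < b) (hbc : b < c) (hc : c < n) :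
    0 < det2 (p (arcPt n hn (s + b)) - p (arcPt n hn (s + a)))
        (p (arcPt n hn (s + c)) - p (arcPt n hn (s + a))) := by
  set x := arcPt n hn (s + a) with hx
  set y := arcPt n hn (s + b) with hy
  set z := arcPt n hn (s + c) with hz
  have hxv : (x : ℕ) = (s % n + a) % n := by rw [hx, arcPt_val, Nat.add_mod, Nat.mod_eq_of_lt (by omega : a < n)]
  have hyv : (y : ℕ) = (s % n + b) % n := by rw [hy, arcPt_val, Nat.add_mod, Nat.mod_eq_of_lt (by omega : b < n)]
  have hzv : (z : ℕ) = (s % n + c) % n := by rw [hz, arcPt_val, Nat.add_mod, Nat.mod_eq_of_lt hc]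
  have hs : s % n < n := Nat.mod_lt _ hn
  have modsmall : ∀ k : ℕ, k < n → k % n = k := fun k hk => Nat.mod_eq_of_lt hk
  have modbig : ∀ k : ℕ, n ≤ k → k < 2*n → k % n = k - n := by
    intro k h1 h2
    rw [Nat.mod_eq_sub_mod h1, Nat.mod_eq_of_lt (by omega)]
  -- case analysis on wrapping
  rcases lt_or_ge (s % n + c) n with hcw | hcw
  · -- no wrap: x < y < z
    have h1 : (x:ℕ) = s % n + a := by rw [hxv, modsmall _ (by omega)]
    have h2 : (y:ℕ) = s % n + b := by rw [hyv, modsmall _ (by omega)]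
    have h3 : (z:ℕ) = s % n + c := by rw [hzv, modsmall _ hcw]
    exact hp x y z (by rw [Fin.lt_def]; omega) (by rw [Fin.lt_def]; omega)
  · rcases lt_or_ge (s % n + b) n with hbw | hbw
    · -- only c wraps: z < x < y
      have h1 : (x:ℕ) = s % n + a := by rw [hxv, modsmall _ (by omega)]
      have h2 : (y:ℕ) = s % n + b := by rw [hyv, modsmall _ hbw]
      have h3 : (z:ℕ) = s % n + c - n := by rw [hzv, modbig _ hcw (by omega)]
      have := hp z x y (by rw [Fin.lt_def]; omega) (by rw [Fin.lt_def]; omega)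
      calc (0:ℝ) < det2 (p x - p z) (p y - p z) := this
        _ = det2 (p y - p x) (p z - p x) := by rw [det2_cycle (p z) (p x) (p y)]
    · rcases lt_or_ge (s % n + a) n with haw | haw
      · -- b and c wrap: y < z < x
        have h1 : (x:ℕ) = s % n + a := by rw [hxv, modsmall _ haw]
        have h2 : (y:ℕ) = s % n + b - n := by rw [hyv, modbig _ hbw (by omega)]
        have h3 : (z:ℕ) = s % n + c - n := by rw [hzv, modbig _ hcw (by omega)]
        have := hp y z x (by rw [Fin.lt_def]; omega) (by rw [Fin.lt_def]; omega)
        calc (0:ℝ) < det2 (p z - p y) (p x - p y) := this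
          _ = det2 (p y - p x) (p z - p x) := (det2_cycle (p x) (p y) (p z)).symm
      · -- all wrap: x < y < z
        have h1 : (x:ℕ) = s % n + a - n := by rw [hxv, modbig _ haw (by omega)]
        have h2 : (y:ℕ) = s % n + b - n := by rw [hyv, modbig _ hbw (by omega)]
        have h3 : (z:ℕ) = s % n + c - n := by rw [hzv, modbig _ hcw (by omega)]
        exact hp x y z (by rw [Fin.lt_def]; omega) (by rw [Fin.lt_def]; omega)

lemma arcPt_small {n : ℕ} (hn : 0 < n) {j : ℕ} (hj : j < n) : arcPt n hn j = ⟨j, hj⟩ := by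
  apply Fin.ext; exact Nat.mod_eq_of_lt hj

lemma nat_ivt (f : ℕ → Prop) {a b : ℕ} (hab : a ≤ b) (ha : f a) (hb : ¬ f b) :
    ∃ j, a ≤ j ∧ j + 1 ≤ b ∧ f j ∧ ¬ f (j + 1) := by
  by_contra hcon
  simp only [not_exists, not_and, not_not] at hcon
  have key : ∀ k, a ≤ k → k ≤ b → f k := by
    intro k hk
    refine Nat.le_induction (fun _ => ha) ?_ k hk
    intro k hk ih hkb
    exact hcon k hk hkb (ih (by omega))
  exact hb (key b hab le_rfl)

lemma good_rev {n : ℕ} (hn : 0 < n) (σ : Equiv.Perm (Fin n)) {m : ℕ} (hm : m < n) {s : ℕ}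
    (h : ∀ j (hj : j ≤ m), ∃ r ≤ m, σ ⟨j, by omega⟩ = arcPt n hn (s + r)) :
    ∀ r ≤ m, ∃ j, ∃ hj : j ≤ m, σ ⟨j, by omega⟩ = arcPt n hn (s + r) := by
  intro r hr
  set F : Fin (m + 1) → Fin (m + 1) := fun j =>
    ⟨Classical.choose (h j.val (by omega)), by
      have := (Classical.choose_spec (h j.val (by omega))).1; omega⟩ with hF
  have hFspec : ∀ j : Fin (m + 1),
      σ ⟨j.val, by omega⟩ = arcPt n hn (s + (F j).val) :=
    fun j => (Classical.choose_spec (h j.val (by omega))).2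
  have hFinj : Function.Injective F := by
    intro j j' hjj
    have h1 : (F j).val = (F j').val := congrArg Fin.val hjj
    have h2 : arcPt n hn (s + (F j).val) = arcPt n hn (s + (F j').val) := by rw [h1]
    have h3 : σ ⟨j.val, by omega⟩ = σ ⟨j'.val, by omega⟩ := by
      rw [hFspec j, hFspec j', h2]
    have h4 := σ.injective h3
    have h5 : j.val = j'.val := congrArg (fun x : Fin n => x.val) h4
    exact Fin.ext h5
  have hFsurj : Function.Surjective F := Finite.surjective_of_injective hFinj
  obtain ⟨j, hj⟩ := hFsurj ⟨r, by omega⟩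
  refine ⟨j.val, by have := j.isLt; omega, ?_⟩
  have h6 := hFspec j
  rw [hj] at h6
  exact h6

set_option maxHeartbeats 2000000 in
lemma visited_arc {n : ℕ} (hn : 2 ≤ n) (p : Fin n → ℝ × ℝ) (hp : CCWConvex p)
    (σ : Equiv.Perm (Fin n)) (hσ : NoncrossingPath (p ∘ σ)) :
    ∀ m, ∀ _hm : m ≤ n - 1, ∃ s, ∀ j (hj : j ≤ m), ∃ r ≤ m,
      σ ⟨j, by omega⟩ = arcPt n (by omega) (s + r) := by
  have hn0 : 0 < n := by omega
  intro m
  induction m with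
  | zero =>
    intro _
    refine ⟨(σ ⟨0, by omega⟩).val, ?_⟩
    intro j hj
    have hj0 : j = 0 := by omega
    subst hj0
    exact ⟨0, le_rfl, by rw [Nat.add_zero, arcPt_small hn0 (σ ⟨0, by omega⟩).isLt]⟩
  | succ m ih =>
    intro hm1
    obtain ⟨s, hs⟩ := ih (by omega)
    have hmn : m < n := by omega
    have hm1n : m + 1 < n := by omega
    set q := σ ⟨m + 1, hm1n⟩ with hqdef
    set e := off s q with hedef
    have he_lt : e < n := off_lt hn0 s q
    have hq : arcPt n hn0 (s + e) = q := arcPt_off hn0 s q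
    clear_value q e
    have hrev := good_rev hn0 σ hmn hs
    have he_ge : m + 1 ≤ e := by
      by_contra hcc
      push_neg at hcc
      obtain ⟨j, hj, hje⟩ := hrev e (by omega)
      have : (⟨j, by omega⟩ : Fin n) = ⟨m + 1, hm1n⟩ := σ.injective (by rw [hje, hq, hqdef])
      have := congrArg Fin.val this
      simp at this
      omega
    rcases eq_or_lt_of_le he_ge with he1 | he2
    · -- e = m + 1
      refine ⟨s, ?_⟩
      intro j hj
      rcases Nat.lt_or_ge j (m + 1) with h | h
      · obtain ⟨r, hr, hh⟩ := hs j (by omega)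
        exact ⟨r, by omega, hh⟩
      · have hj1 : j = m + 1 := by omega
        subst hj1
        refine ⟨m + 1, le_rfl, ?_⟩
        have harr : s + (m + 1) = s + e := by omega
        rw [harr, hq, hqdef]
    · rcases eq_or_lt_of_le (show e ≤ n - 1 by omega) with he3 | he4
      · -- e = n - 1 : extend on the left
        refine ⟨s + (n - 1), ?_⟩
        intro j hj
        rcases Nat.lt_or_ge j (m + 1) with h | h
        · obtain ⟨r, hr, hh⟩ := hs j (by omega)
          refine ⟨r + 1, by omega, ?_⟩
          have harith : s + (n - 1) + (r + 1) = (s + r) + n := by omega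
          rw [harith, arcPt_add_n]
          exact hh
        · have hj1 : j = m + 1 := by omega
          subst hj1
          refine ⟨0, by omega, ?_⟩
          have harr : s + (n - 1) + 0 = s + e := by omega
          rw [harr, hq, hqdef]
      · -- m + 1 < e < n - 1 : derive a crossing, contradiction
        exfalso
        obtain ⟨c, hc, hcq⟩ := hs m le_rfl
        -- future points have offset ≥ m+1
        have hfut : ∀ j (hj : j < n), m + 1 ≤ j → m + 1 ≤ off s (σ ⟨j, hj⟩) := by
          intro j hjn h1
          by_contra hcc
          push_neg at hcc
          obtain ⟨j', hj', hje⟩ := hrev (off s (σ ⟨j, hjn⟩)) (by omega)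
          rw [arcPt_off hn0] at hje
          have := congrArg Fin.val (σ.injective hje)
          simp at this
          omega
        -- offsets of future points other than q differ from e
        have hne : ∀ j (hj : j < n), m + 2 ≤ j → off s (σ ⟨j, hj⟩) ≠ e := by
          intro j hjn h1 hcc
          have : σ ⟨j, hjn⟩ = σ ⟨m + 1, hm1n⟩ := by
            rw [← arcPt_off hn0 s (σ ⟨j, hjn⟩), hcc, hq, hqdef]
          have := congrArg Fin.val (σ.injective this)
          simp at this
          omega
        -- time of a given future offset
        have htOf : ∀ r, m + 1 ≤ r → r ≤ n - 1 → r ≠ e →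
            ∃ u, m + 2 ≤ u ∧ u ≤ n - 1 ∧ ∀ hu : u < n, σ ⟨u, hu⟩ = arcPt n hn0 (s + r) := by
          intro r h1 h2 h3
          set x := arcPt n hn0 (s + r) with hxdef
          set u := (σ.symm x).val with hudef
          have hun : u < n := (σ.symm x).isLt
          have hσu : σ ⟨u, hun⟩ = x := by
            have : (⟨u, hun⟩ : Fin n) = σ.symm x := Fin.ext rfl
            rw [this]; exact σ.apply_symm_apply x
          have hoff : off s (σ ⟨u, hun⟩) = r := by rw [hσu, hxdef, off_arcPt hn0 s r (by omega)]
          have hu1 : m + 1 ≤ u := by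
            by_contra hcc
            push_neg at hcc
            obtain ⟨r', hr', hh⟩ := hs u (by omega)
            have : σ ⟨u, hun⟩ = arcPt n hn0 (s + r') := hh
            rw [hσu, hxdef] at this
            have := arcPt_cancel hn0 (by omega : r < n) (by omega : r' < n) this
            omega
          have hu2 : u ≠ m + 1 := by
            intro hcc
            have : σ ⟨u, hun⟩ = q := by rw [hqdef]; congr 1; exact Fin.ext hcc
            rw [this] at hoff
            exact h3 (hoff.symm.trans hedef.symm)
          exact ⟨u, by omega, by omega, fun hu => by
            have : (⟨u, hu⟩ : Fin n) = ⟨u, hun⟩ := rfl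
            rw [this, hσu]⟩
        obtain ⟨t1, ht1a, ht1b, ht1c⟩ := htOf (m + 1) le_rfl (by omega) (by omega)
        obtain ⟨t2, ht2a, ht2b, ht2c⟩ := htOf (n - 1) (by omega) le_rfl (by omega)
        -- the traversal function as ℕ → Prop
        set f : ℕ → Prop := fun j => off s (σ (arcPt n hn0 j)) < e with hfdef
        have hfval : ∀ j (hj : j < n), f j ↔ off s (σ ⟨j, hj⟩) < e := by
          intro j hj
          rw [hfdef]
          simp only
          rw [arcPt_small hn0 hj]
        clear_value f
        have hft1 : f t1 := by
          rw [hfval t1 (by omega)]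
          rw [ht1c (by omega), off_arcPt hn0 s (m+1) (by omega)]
          omega
        have hft2 : ¬ f t2 := by
          rw [hfval t2 (by omega)]
          rw [ht2c (by omega), off_arcPt hn0 s (n-1) (by omega)]
          omega
        have hmain : ∃ j, ∃ _h2 : m + 2 ≤ j, ∃ _hb : j + 1 ≤ n - 1,
            ((off s (σ ⟨j, by omega⟩) < e ∧ e < off s (σ ⟨j + 1, by omega⟩)) ∨
             (off s (σ ⟨j + 1, by omega⟩) < e ∧ e < off s (σ ⟨j, by omega⟩))) := by
          have ht12 : t1 ≠ t2 := by
            intro hcc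
            have e1 := ht1c (by omega)
            have e2 := ht2c (by omega)
            subst hcc
            have h2 := e1.symm.trans e2
            have := arcPt_cancel hn0 (by omega : m + 1 < n) (by omega : n - 1 < n) h2
            omega
          rcases Nat.lt_or_ge t1 t2 with hlt | hge
          · obtain ⟨j, hj1, hj2, hj3, hj4⟩ := nat_ivt f (le_of_lt hlt) hft1 hft2
            refine ⟨j, by omega, by omega, Or.inl ⟨?_, ?_⟩⟩

            · exact (hfval j (by omega)).mp hj3
            · have := (hfval (j+1) (by omega)).not.mp hj4
              push_neg at this
              have hne2 := hne (j+1) (by omega) (by omega)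
              omega
          · have hlt2 : t2 < t1 := by omega
            obtain ⟨j, hj1, hj2, hj3, hj4⟩ := nat_ivt (fun j => ¬ f j) (le_of_lt hlt2) hft2 (not_not.mpr hft1)
            refine ⟨j, by omega, by omega, Or.inr ⟨?_, ?_⟩⟩
            · have := (hfval (j+1) (by omega)).mp (not_not.mp hj4)
              exact this
            · have := (hfval j (by omega)).not.mp hj3
              push_neg at this
              have hne2 := hne j (by omega) (by omega)
              omega
        obtain ⟨j, hja, hjb, hjor⟩ := hmain
        have hjn : j < n := by omega
        have hj1n : j + 1 < n := by omega
        -- the noncrossing hypothesis for edges m and j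
        have hdisj := hσ m j hm1n (by omega : j + 1 < n) (by omega : m < j)
        rw [if_neg (by omega : ¬ j = m + 1)] at hdisj
        -- identify the chord endpoints
        have hch1 : (p ∘ σ) (⟨m, by omega⟩ : Fin n) = p (arcPt n hn0 (s + c)) := by
          simp only [Function.comp_apply]; rw [hcq]
        have hch2 : (p ∘ σ) (⟨m + 1, hm1n⟩ : Fin n) = p (arcPt n hn0 (s + e)) := by
          simp only [Function.comp_apply]; rw [hq, hqdef]
        rcases hjor with ⟨ho1, ho2⟩ | ⟨ho1, ho2⟩
        · have hA : off s (σ ⟨j, hjn⟩) < e := ho1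
          have hB : e < off s (σ ⟨j + 1, hj1n⟩) := ho2
          obtain ⟨o1, ho1def⟩ : ∃ o, off s (σ ⟨j, hjn⟩) = o := ⟨_, rfl⟩
          obtain ⟨o2, ho2def⟩ : ∃ o, off s (σ ⟨j + 1, hj1n⟩) = o := ⟨_, rfl⟩
          rw [ho1def] at hA
          rw [ho2def] at hB
          have hb1 : m + 1 ≤ o1 := by rw [← ho1def]; exact hfut j hjn (by omega)
          have hb2 : o2 < n := by rw [← ho2def]; exact off_lt hn0 s _
          obtain ⟨z, hz1, hz2⟩ := segs_meet (p (arcPt n hn0 (s + c))) (p (arcPt n hn0 (s + o1)))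
            (p (arcPt n hn0 (s + e))) (p (arcPt n hn0 (s + o2)))
            (ccw_offsets hn0 hp s (by omega) (by omega) (by omega))
            (ccw_offsets hn0 hp s (by omega) (by omega) (by omega))
            (ccw_offsets hn0 hp s (by omega) (by omega) (by omega))
            (ccw_offsets hn0 hp s (by omega) (by omega) (by omega))
          have hx1 : arcPt n hn0 (s + o1) = σ ⟨j, hjn⟩ := by
            rw [← ho1def]; exact arcPt_off hn0 s _
          have hx2 : arcPt n hn0 (s + o2) = σ ⟨j + 1, hj1n⟩ := by
            rw [← ho2def]; exact arcPt_off hn0 s _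
          have he1 : (p ∘ σ) (⟨j, hjn⟩ : Fin n) = p (arcPt n hn0 (s + o1)) := by
            simp only [Function.comp_apply]; rw [hx1]
          have he2 : (p ∘ σ) (⟨j + 1, hj1n⟩ : Fin n) = p (arcPt n hn0 (s + o2)) := by
            simp only [Function.comp_apply]; rw [hx2]
          rw [hch1, hch2, he1, he2] at hdisj
          exact Set.disjoint_left.mp hdisj hz1 hz2
        · have hA : off s (σ ⟨j + 1, hj1n⟩) < e := ho1
          have hB : e < off s (σ ⟨j, hjn⟩) := ho2
          obtain ⟨o1, ho1def⟩ : ∃ o, off s (σ ⟨j + 1, hj1n⟩) = o := ⟨_, rfl⟩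
          obtain ⟨o2, ho2def⟩ : ∃ o, off s (σ ⟨j, hjn⟩) = o := ⟨_, rfl⟩
          rw [ho1def] at hA
          rw [ho2def] at hB
          have hb1 : m + 1 ≤ o1 := by rw [← ho1def]; exact hfut (j+1) hj1n (by omega)
          have hb2 : o2 < n := by rw [← ho2def]; exact off_lt hn0 s _
          obtain ⟨z, hz1, hz2⟩ := segs_meet (p (arcPt n hn0 (s + c))) (p (arcPt n hn0 (s + o1)))
            (p (arcPt n hn0 (s + e))) (p (arcPt n hn0 (s + o2)))
            (ccw_offsets hn0 hp s (by omega) (by omega) (by omega))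
            (ccw_offsets hn0 hp s (by omega) (by omega) (by omega))
            (ccw_offsets hn0 hp s (by omega) (by omega) (by omega))
            (ccw_offsets hn0 hp s (by omega) (by omega) (by omega))
          have hx1 : arcPt n hn0 (s + o1) = σ ⟨j + 1, hj1n⟩ := by
            rw [← ho1def]; exact arcPt_off hn0 s _
          have hx2 : arcPt n hn0 (s + o2) = σ ⟨j, hjn⟩ := by
            rw [← ho2def]; exact arcPt_off hn0 s _
          have he1 : (p ∘ σ) (⟨j, hjn⟩ : Fin n) = p (arcPt n hn0 (s + o2)) := by
            simp only [Function.comp_apply]; rw [hx2]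
          have he2 : (p ∘ σ) (⟨j + 1, hj1n⟩ : Fin n) = p (arcPt n hn0 (s + o1)) := by
            simp only [Function.comp_apply]; rw [hx1]
          rw [hch1, hch2, he1, he2] at hdisj
          rw [segment_symm] at hz2
          exact Set.disjoint_left.mp hdisj hz1 hz2

lemma arcPt_congr_add {n : ℕ} (hn : 0 < n) {x y : ℕ}
    (h : arcPt n hn x = arcPt n hn y) (k : ℕ) :
    arcPt n hn (x + k) = arcPt n hn (y + k) := by
  apply Fin.ext
  have hxy : x % n = y % n := congrArg Fin.val h
  exact Nat.ModEq.add_right k hxy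

theorem arc_labels_in_path_order {n : ℕ} (hn : 2 ≤ n)
    (p : Fin n → ℝ × ℝ) (hp : CCWConvex p)
    (σ : Equiv.Perm (Fin n)) (hσ : NoncrossingPath (p ∘ σ))
    (i t : ℕ) (ht : t ≤ n)
    (hfirst : ∀ r < t, σ ⟨0, by omega⟩ ≠ arcPt n (by omega) (i + r))
    (hlast : ∀ r < t, σ ⟨n - 1, by omega⟩ ≠ arcPt n (by omega) (i + r)) :
    (∀ a b : ℕ, a < b → b < t →
        σ.symm (arcPt n (by omega) (i + a)) < σ.symm (arcPt n (by omega) (i + b))) ∨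
    (∀ a b : ℕ, a < b → b < t →
        σ.symm (arcPt n (by omega) (i + b)) < σ.symm (arcPt n (by omega) (i + a))) := by
  have hn0 : 0 < n := by omega
  rcases Nat.eq_zero_or_pos t with ht0 | ht1
  · left; intro a b hab hbt; omega
  -- base point and offsets
  obtain ⟨bv, hbv⟩ : ∃ bv, arcPt n hn0 bv = σ ⟨0, by omega⟩ :=
    ⟨(σ ⟨0, by omega⟩).val, arcPt_small hn0 (σ ⟨0, by omega⟩).isLt⟩
  have hptδ : ∀ x : Fin n, arcPt n hn0 (bv + off bv x) = x := fun x => arcPt_off hn0 bv x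
  -- Δ : offset of the last point
  obtain ⟨Δ, hΔpt, hΔlt⟩ :
      ∃ d, arcPt n hn0 (bv + d) = σ ⟨n - 1, by omega⟩ ∧ d < n ∧
        off bv (σ ⟨n - 1, by omega⟩) = d :=
    ⟨off bv (σ ⟨n - 1, by omega⟩), hptδ _, off_lt hn0 bv _, rfl⟩
  obtain ⟨hΔlt, hΔval⟩ := hΔlt
  have hΔ1 : 1 ≤ Δ := by
    rcases Nat.eq_zero_or_pos Δ with h0 | h1
    · exfalso
      rw [h0, Nat.add_zero] at hΔpt
      rw [hbv] at hΔpt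
      have := σ.injective hΔpt
      have := congrArg Fin.val this
      simp at this
      omega
    · exact h1
  -- time function fact
  have hsymm : ∀ x : Fin n, σ ⟨(σ.symm x).val, (σ.symm x).isLt⟩ = x := by
    intro x
    have h1 : (⟨(σ.symm x).val, (σ.symm x).isLt⟩ : Fin n) = σ.symm x := Fin.ext rfl
    rw [h1]; exact σ.apply_symm_apply x
  have hva := visited_arc hn p hp σ hσ
  -- δ-value of an arc point relative to the arc base s, c
  have hoffshift : ∀ s c r : ℕ, c < n → r < n → arcPt n hn0 (s + c) = arcPt n hn0 bv →
      off bv (arcPt n hn0 (s + r)) = if c ≤ r then r - c else r + n - c := by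
    intro s c r hc hr hb
    rcases le_or_gt c r with hcr | hcr
    · rw [if_pos hcr]
      have h1 : arcPt n hn0 (bv + (r - c)) = arcPt n hn0 (s + c + (r - c)) :=
        arcPt_congr_add hn0 hb.symm (r - c)
      have h2 : s + c + (r - c) = s + r := by omega
      rw [h2] at h1
      rw [← h1, off_arcPt hn0 bv (r - c) (by omega)]
    · rw [if_neg (by omega)]
      have h1 : arcPt n hn0 (bv + (r + n - c)) = arcPt n hn0 (s + c + (r + n - c)) :=
        arcPt_congr_add hn0 hb.symm (r + n - c)
      have h2 : s + c + (r + n - c) = (s + r) + n := by omega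
      rw [h2, arcPt_add_n] at h1
      rw [← h1, off_arcPt hn0 bv (r + n - c) (by omega)]
  -- CLAIM R : on the right territory, times increase with offset
  have claimR : ∀ x y : Fin n, off bv x < off bv y → off bv y ≤ Δ - 1 →
      (σ.symm x).val < (σ.symm y).val := by
    intro x y hxy hyΔ
    obtain ⟨m, hmn, hym⟩ : ∃ m, ∃ hmn : m < n, σ ⟨m, hmn⟩ = y :=
      ⟨(σ.symm y).val, (σ.symm y).isLt, hsymm y⟩
    have hmval : (σ.symm y).val = m := by
      rw [← hym, Equiv.symm_apply_apply]
    have hyne : y ≠ σ ⟨n - 1, by omega⟩ := by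
      intro hcc
      rw [hcc] at hyΔ
      omega
    have hmne : m ≠ n - 1 := by
      intro hcc
      apply hyne
      rw [← hym]
      congr 1
      exact Fin.ext hcc
    have hm2 : m ≤ n - 2 := by omega
    obtain ⟨s, hs⟩ := hva m (by omega)
    have hrev := good_rev hn0 σ (show m < n by omega) hs
    obtain ⟨c, hc, hc0⟩ := hs 0 (by omega)
    have hcb : arcPt n hn0 (s + c) = arcPt n hn0 bv := by rw [hbv, ← hc0]
    obtain ⟨ry, hry, hy2⟩ := hs m le_rfl
    have hy3 : y = arcPt n hn0 (s + ry) := by rw [← hym]; exact hy2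
    have hyoff : off bv y = if c ≤ ry then ry - c else ry + n - c := by
      rw [hy3]; exact hoffshift s c ry (by omega) (by omega) hcb
    rcases le_or_gt c ry with hcr | hcr
    · -- right part : x is visited earlier
      rw [if_pos hcr] at hyoff
      have hxr : arcPt n hn0 (s + (c + off bv x)) = x := by
        have h1 : arcPt n hn0 (bv + off bv x) = arcPt n hn0 (s + c + off bv x) :=
          arcPt_congr_add hn0 hcb.symm (off bv x)
        have h2 : s + c + off bv x = s + (c + off bv x) := by omega
        rw [h2] at h1
        rw [← h1]
        exact hptδ x
      obtain ⟨j, hj, hj2⟩ := hrev (c + off bv x) (by omega)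
      have hjx : σ ⟨j, by omega⟩ = x := hj2.trans hxr
      have hjval : (σ.symm x).val = j := by
        rw [← hjx, Equiv.symm_apply_apply]
      have hne2 : (σ.symm x).val ≠ m := by
        intro hcc
        have : x = y := by
          rw [← hsymm x, ← hym]
          congr 1
          exact Fin.ext hcc
        rw [this] at hxy
        omega
      omega
    · -- y is in the left part : contradiction since σ(n-1) would be visited
      exfalso
      rw [if_neg (by omega)] at hyoff
      have hlast2 : σ ⟨n - 1, by omega⟩ = arcPt n hn0 (s + (c + Δ - n)) := by
        have h1 : arcPt n hn0 (bv + Δ) = arcPt n hn0 (s + c + Δ) :=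
          arcPt_congr_add hn0 hcb.symm Δ
        have h2 : s + c + Δ = (s + (c + Δ - n)) + n := by omega
        rw [h2, arcPt_add_n] at h1
        rw [← hΔpt, h1]
      obtain ⟨j, hj, hj2⟩ := hrev (c + Δ - n) (by omega)
      have h5 : σ (⟨j, by omega⟩ : Fin n) = σ ⟨n - 1, by omega⟩ := hj2.trans hlast2.symm
      have h6 := congrArg Fin.val (σ.injective h5)
      simp at h6
      omega
  -- CLAIM L : on the left territory, times decrease with offset
  have claimL : ∀ x y : Fin n, Δ + 1 ≤ off bv x → off bv x < off bv y →
      (σ.symm y).val < (σ.symm x).val := by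
    intro x y hΔx hxy
    obtain ⟨m, hmn, hxm⟩ : ∃ m, ∃ hmn : m < n, σ ⟨m, hmn⟩ = x :=
      ⟨(σ.symm x).val, (σ.symm x).isLt, hsymm x⟩
    have hmval : (σ.symm x).val = m := by
      rw [← hxm, Equiv.symm_apply_apply]
    have hxne : x ≠ σ ⟨n - 1, by omega⟩ := by
      intro hcc
      rw [hcc] at hΔx
      omega
    have hmne : m ≠ n - 1 := by
      intro hcc
      apply hxne
      rw [← hxm]
      congr 1
      exact Fin.ext hcc
    have hm2 : m ≤ n - 2 := by omega
    obtain ⟨s, hs⟩ := hva m (by omega)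
    have hrev := good_rev hn0 σ (show m < n by omega) hs
    obtain ⟨c, hc, hc0⟩ := hs 0 (by omega)
    have hcb : arcPt n hn0 (s + c) = arcPt n hn0 bv := by rw [hbv, ← hc0]
    obtain ⟨rx, hrx, hx2⟩ := hs m le_rfl
    have hx3 : x = arcPt n hn0 (s + rx) := by rw [← hxm]; exact hx2
    have hxoff : off bv x = if c ≤ rx then rx - c else rx + n - c := by
      rw [hx3]; exact hoffshift s c rx (by omega) (by omega) hcb
    have hylt : off bv y < n := off_lt hn0 bv y
    rcases le_or_gt c rx with hcr | hcr
    · -- x in right part : σ(n-1) would be visited, contradiction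
      exfalso
      rw [if_pos hcr] at hxoff
      have hlast2 : σ ⟨n - 1, by omega⟩ = arcPt n hn0 (s + (c + Δ)) := by
        have h1 : arcPt n hn0 (bv + Δ) = arcPt n hn0 (s + c + Δ) :=
          arcPt_congr_add hn0 hcb.symm Δ
        have h2 : s + c + Δ = s + (c + Δ) := by omega
        rw [h2] at h1
        rw [← hΔpt, h1]
      obtain ⟨j, hj, hj2⟩ := hrev (c + Δ) (by omega)
      have h5 : σ (⟨j, by omega⟩ : Fin n) = σ ⟨n - 1, by omega⟩ := hj2.trans hlast2.symm
      have h6 := congrArg Fin.val (σ.injective h5)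
      simp at h6
      omega
    · -- x in left part : y was visited earlier
      rw [if_neg (by omega)] at hxoff
      have hyr : arcPt n hn0 (s + (c + off bv y - n)) = y := by
        have h1 : arcPt n hn0 (bv + off bv y) = arcPt n hn0 (s + c + off bv y) :=
          arcPt_congr_add hn0 hcb.symm (off bv y)
        have h2 : s + c + off bv y = (s + (c + off bv y - n)) + n := by omega
        rw [h2, arcPt_add_n] at h1
        rw [← h1]
        exact hptδ y
      obtain ⟨j, hj, hj2⟩ := hrev (c + off bv y - n) (by omega)
      have hjy : σ ⟨j, by omega⟩ = y := hj2.trans hyr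
      have hjval : (σ.symm y).val = j := by
        rw [← hjy, Equiv.symm_apply_apply]
      have hne2 : (σ.symm y).val ≠ m := by
        intro hcc
        have : y = x := by
          rw [← hsymm y, ← hxm]
          congr 1
          exact Fin.ext hcc
        rw [this] at hxy
        omega
      omega
  -- offsets of the arc I
  have hδne0 : ∀ r, r < t → off bv (arcPt n hn0 (i + r)) ≠ 0 := by
    intro r hr hcc
    apply hfirst r hr
    rw [← hbv]
    have h1 := hptδ (arcPt n hn0 (i + r))
    rw [hcc, Nat.add_zero] at h1
    exact h1
  have hδneΔ : ∀ r, r < t → off bv (arcPt n hn0 (i + r)) ≠ Δ := by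
    intro r hr hcc
    apply hlast r hr
    rw [← hΔpt, ← hcc]
    exact hptδ (arcPt n hn0 (i + r))
  have hδsucc : ∀ r, r + 1 < t →
      off bv (arcPt n hn0 (i + (r + 1))) = off bv (arcPt n hn0 (i + r)) + 1 := by
    intro r hr
    have h0 := hptδ (arcPt n hn0 (i + r))
    have h1 : arcPt n hn0 (bv + off bv (arcPt n hn0 (i + r)) + 1) = arcPt n hn0 (i + r + 1) :=
      arcPt_congr_add hn0 h0 1
    have hlt : off bv (arcPt n hn0 (i + r)) < n := off_lt hn0 bv _
    rcases eq_or_lt_of_le (show off bv (arcPt n hn0 (i + r)) + 1 ≤ n by omega) with hw | hw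
    · -- would wrap to the base point : impossible
      exfalso
      apply hδne0 (r + 1) hr
      have h2 : bv + off bv (arcPt n hn0 (i + r)) + 1 = bv + n := by omega
      rw [h2, arcPt_add_n] at h1
      have h3 : arcPt n hn0 (i + (r + 1)) = arcPt n hn0 (bv + 0) := by
        rw [show i + (r + 1) = i + r + 1 from by omega, ← h1, Nat.add_zero]
      rw [h3, off_arcPt hn0 bv 0 (by omega)]
    · have h2 : bv + off bv (arcPt n hn0 (i + r)) + 1 =
          bv + (off bv (arcPt n hn0 (i + r)) + 1) := by omega
      rw [h2] at h1
      have h3 : arcPt n hn0 (i + (r + 1)) =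
          arcPt n hn0 (bv + (off bv (arcPt n hn0 (i + r)) + 1)) := by
        rw [h1, show i + (r + 1) = i + r + 1 from by omega]
      rw [h3, off_arcPt hn0 bv _ hw]
  have hδlin : ∀ r, r < t →
      off bv (arcPt n hn0 (i + r)) = off bv (arcPt n hn0 (i + 0)) + r := by
    intro r
    induction r with
    | zero => intro _; rfl
    | succ k ihk =>
      intro hk
      rw [hδsucc k hk, ihk (by omega)]
      omega
  -- dichotomy
  rcases le_or_gt (off bv (arcPt n hn0 (i + 0))) Δ with hside | hside
  · -- strictly below Δ (can't equal Δ); all of I stays below Δ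
    have hbelow : ∀ r, r < t → off bv (arcPt n hn0 (i + r)) ≤ Δ - 1 := by
      intro r
      induction r with
      | zero => intro h0
                have := hδneΔ 0 h0
                omega
      | succ k ihk =>
        intro hk
        have h1 := ihk (by omega)
        have h2 := hδsucc k hk
        have h3 := hδneΔ (k + 1) hk
        omega
    left
    intro a b hab hbt
    have hR := claimR (arcPt n hn0 (i + a)) (arcPt n hn0 (i + b)) ?_ (hbelow b hbt)
    · rw [Fin.lt_def]
      exact hR
    · rw [hδlin a (by omega), hδlin b hbt]; omega
  · -- above Δ
    have habove : ∀ r, r < t → Δ + 1 ≤ off bv (arcPt n hn0 (i + r)) := by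
      intro r hr
      rw [hδlin r hr]
      omega
    right
    intro a b hab hbt
    have hL := claimL (arcPt n hn0 (i + a)) (arcPt n hn0 (i + b)) (habove a (by omega)) ?_
    · rw [Fin.lt_def]
      exact hL
    · rw [hδlin a (by omega), hδlin b hbt]; omega
end

section
/- Let p : Fin 5 → ℝ² be in counterclockwise convex position, and let q : Fin 5 → ℝ² be such that q ∘ ρ is in counterclockwise convex position, where ρ : Fin 5 → Fin 5 is the bijection with ρ(0)=0, ρ(1)=2, ρ(2)=4, ρ(3)=1, ρ(4)=3 (i.e., with 1-based labels the points of q appear counterclockwise along their convex hull in the order q₁, q₃, q₅, q₂, q₄). Then p and q do not admit compatible paths: there is no bijection σ : Fin 5 → Fin 5 whose spanning path is noncrossing on p and also noncrossing on q. -/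
lemma cross_not_disjoint (A B C D : ℝ × ℝ)
    (h1 : det2 (B - A) (C - A) < 0) (h2 : 0 < det2 (B - A) (D - A))
    (h3 : 0 < det2 (D - C) (A - C)) (h4 : det2 (D - C) (B - C) < 0) :
    ¬ Disjoint (segment ℝ A B) (segment ℝ C D) := by
  obtain ⟨a1, a2⟩ := A; obtain ⟨b1, b2⟩ := B
  obtain ⟨c1, c2⟩ := C; obtain ⟨d1, d2⟩ := D
  simp only [det2, Prod.fst_sub, Prod.snd_sub] at h1 h2 h3 h4
  set E1 : ℝ := (d1 - c1) * (a2 - c2) - (d2 - c2) * (a1 - c1) with hE1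
  set E2 : ℝ := (d1 - c1) * (b2 - c2) - (d2 - c2) * (b1 - c1) with hE2
  set D1 : ℝ := (b1 - a1) * (c2 - a2) - (b2 - a2) * (c1 - a1) with hD1
  set D2 : ℝ := (b1 - a1) * (d2 - a2) - (b2 - a2) * (d1 - a1) with hD2
  have hEd : (0:ℝ) < E1 - E2 := by linarith
  have hDd : (0:ℝ) < D2 - D1 := by linarith
  set t := E1 / (E1 - E2) with ht
  set s := -D1 / (D2 - D1) with hs
  have ht0 : 0 ≤ t := div_nonneg h3.le hEd.le
  have ht1 : t ≤ 1 := by rw [ht, div_le_one hEd]; linarith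
  have hs0 : 0 ≤ s := div_nonneg (by linarith) hDd.le
  have hs1 : s ≤ 1 := by rw [hs, div_le_one hDd]; linarith
  have hE : E1 - E2 ≠ 0 := ne_of_gt hEd
  have hD : D2 - D1 ≠ 0 := ne_of_gt hDd
  have key : ((a1, a2) : ℝ × ℝ) + t • ((b1, b2) - (a1, a2)) =
      ((c1, c2) : ℝ × ℝ) + s • ((d1, d2) - (c1, c2)) := by
    apply Prod.ext <;>
      simp only [Prod.fst_add, Prod.snd_add, Prod.smul_fst, Prod.smul_snd,
        Prod.fst_sub, Prod.snd_sub, smul_eq_mul, ht, hs] <;>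
      field_simp <;> (simp only [hE1, hE2, hD1, hD2]; ring)
  apply Set.not_disjoint_iff.2
  refine ⟨(a1, a2) + t • ((b1, b2) - (a1, a2)), ?_, ?_⟩
  · rw [segment_eq_image']; exact ⟨t, ⟨ht0, ht1⟩, rfl⟩
  · rw [segment_eq_image', key]; exact ⟨s, ⟨hs0, hs1⟩, rfl⟩

lemma chord_not_disjoint {p : Fin 5 → ℝ × ℝ} (hp : CCWConvex p) {a c b d : Fin 5}
    (h1 : a < c) (h2 : c < b) (h3 : b < d) :
    ¬ Disjoint (segment ℝ (p a) (p b)) (segment ℝ (p c) (p d)) := by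
  have hacb := hp a c b h1 h2
  have hacd := hp a c d h1 (h2.trans h3)
  have habd := hp a b d (h1.trans h2) h3
  have hcbd := hp c b d h2 h3
  apply cross_not_disjoint
  · simp only [det2, Prod.fst_sub, Prod.snd_sub] at hacb ⊢; nlinarith [hacb]
  · simp only [det2, Prod.fst_sub, Prod.snd_sub] at habd ⊢; nlinarith [habd]
  · simp only [det2, Prod.fst_sub, Prod.snd_sub] at hacd ⊢; nlinarith [hacd]
  · simp only [det2, Prod.fst_sub, Prod.snd_sub] at hcbd ⊢; nlinarith [hcbd]

/-- Two chords of the convex polygon cross (endpoints interleave). -/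
def chordCross (x1 y1 x2 y2 : Fin 5) : Prop :=
  (min x1 y1 < min x2 y2 ∧ min x2 y2 < max x1 y1 ∧ max x1 y1 < max x2 y2) ∨
  (min x2 y2 < min x1 y1 ∧ min x1 y1 < max x2 y2 ∧ max x2 y2 < max x1 y1)

instance (x1 y1 x2 y2 : Fin 5) : Decidable (chordCross x1 y1 x2 y2) := by
  unfold chordCross; infer_instance

lemma seg_minmax (p : Fin 5 → ℝ × ℝ) (x y : Fin 5) :
    segment ℝ (p x) (p y) = segment ℝ (p (min x y)) (p (max x y)) := by
  rcases le_total x y with h | h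
  · rw [min_eq_left h, max_eq_right h]
  · rw [min_eq_right h, max_eq_left h, segment_symm]

lemma chordCross_not_disjoint {p : Fin 5 → ℝ × ℝ} (hp : CCWConvex p) {x1 y1 x2 y2 : Fin 5}
    (h : chordCross x1 y1 x2 y2) :
    ¬ Disjoint (segment ℝ (p x1) (p y1)) (segment ℝ (p x2) (p y2)) := by
  rw [seg_minmax p x1 y1, seg_minmax p x2 y2]
  rcases h with ⟨h1, h2, h3⟩ | ⟨h1, h2, h3⟩
  · exact chord_not_disjoint hp h1 h2 h3
  · exact fun hd => chord_not_disjoint hp h1 h2 h3 hd.symm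

/-- A path visiting vertices `a b c d e` of the convex 5-gon has a crossing pair of
nonconsecutive edges. -/
def Bad (a b c d e : Fin 5) : Prop :=
  chordCross a b c d ∨ chordCross a b d e ∨ chordCross b c d e

instance (a b c d e : Fin 5) : Decidable (Bad a b c d e) := by
  unfold Bad; infer_instance

/-- Inverse of the relabeling `![0,2,4,1,3]`. -/
def rinv : Fin 5 → Fin 5 := ![0, 3, 1, 4, 2]

lemma key_combinatorics : ∀ a b c d e : Fin 5,
    a ≠ b → a ≠ c → a ≠ d → a ≠ e → b ≠ c → b ≠ d → b ≠ e → c ≠ d → c ≠ e → d ≠ e →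
    Bad a b c d e ∨ Bad (rinv a) (rinv b) (rinv c) (rinv d) (rinv e) := by decide

lemma path_not_bad {P : Fin 5 → ℝ × ℝ} (hP : CCWConvex P) {f : Fin 5 → Fin 5}
    (hf : NoncrossingPath (P ∘ f)) :
    ¬ Bad (f 0) (f 1) (f 2) (f 3) (f 4) := by
  rintro (h | h | h)
  · have hd := hf 0 2 (by omega) (by omega) (by omega)
    rw [if_neg (by omega)] at hd
    exact chordCross_not_disjoint hP h hd
  · have hd := hf 0 3 (by omega) (by omega) (by omega)
    rw [if_neg (by omega)] at hd
    exact chordCross_not_disjoint hP h hd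
  · have hd := hf 1 3 (by omega) (by omega) (by omega)
    rw [if_neg (by omega)] at hd
    exact chordCross_not_disjoint hP h hd

theorem no_compatible_paths_five_points (p q : Fin 5 → ℝ × ℝ)
    (hp : CCWConvex p)
    (hq : CCWConvex (q ∘ ![0, 2, 4, 1, 3])) :
    ¬ ∃ σ : Equiv.Perm (Fin 5),
        NoncrossingPath (p ∘ σ) ∧ NoncrossingPath (q ∘ σ) := by
  rintro ⟨σ, hP, hQ⟩
  have hqs : q ∘ σ = (q ∘ ![0, 2, 4, 1, 3]) ∘ (rinv ∘ σ) := by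
    funext k
    have : ∀ x : Fin 5, (![0, 2, 4, 1, 3] : Fin 5 → Fin 5) (rinv x) = x := by decide
    simp [Function.comp, this]
  rw [hqs] at hQ
  have hne : ∀ i j : Fin 5, i ≠ j → σ i ≠ σ j := fun i j h hc => h (σ.injective hc)
  have hrne : ∀ i j : Fin 5, σ i ≠ σ j → rinv (σ i) ≠ rinv (σ j) := by
    have : Function.Injective rinv := by decide
    exact fun i j h hc => h (this hc)
  rcases key_combinatorics (σ 0) (σ 1) (σ 2) (σ 3) (σ 4)
      (hne _ _ (by decide)) (hne _ _ (by decide)) (hne _ _ (by decide))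
      (hne _ _ (by decide)) (hne _ _ (by decide)) (hne _ _ (by decide))
      (hne _ _ (by decide)) (hne _ _ (by decide)) (hne _ _ (by decide))
      (hne _ _ (by decide)) with h | h
  · exact path_not_bad hp hP h
  · exact path_not_bad hq hQ h
end

section
/- Let n ≥ 2, let p : Fin n → ℝ² be in counterclockwise convex position, let T be a tree on vertex set Fin n whose straight-line drawing on p is noncrossing, and let e = {u, v} be an edge of T. Then the vertex set of the connected component of T − e (the graph T with edge e deleted) containing u is a cyclic arc of Fin n (and consequently so is the vertex set of the component containing v). -/
/-- The straight-line drawing of `G` on the points `p` is noncrossing: segments of two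
distinct edges intersect in at most the image of a common endpoint. -/
def NoncrossingDrawing {n : ℕ} (G : SimpleGraph (Fin n)) (p : Fin n → ℝ × ℝ) : Prop :=
  ∀ u v w x : Fin n, G.Adj u v → G.Adj w x → s(u, v) ≠ s(w, x) →
    segment ℝ (p u) (p v) ∩ segment ℝ (p w) (p x) ⊆
      p '' (({u, v} : Set (Fin n)) ∩ {w, x})

/-! ### Auxiliary geometric lemma: interleaved chords of a convex polygon intersect -/

/-- Two chords whose endpoints strictly interleave (in terms of orientation
determinants) intersect. -/
lemma seg_inter_of_pos {A B C D : ℝ × ℝ}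
    (h1 : 0 < det2 (C - A) (B - A)) (h2 : 0 < det2 (B - C) (D - C))
    (h3 : 0 < det2 (B - A) (D - A)) (h4 : 0 < det2 (C - A) (D - A)) :
    (segment ℝ A B ∩ segment ℝ C D).Nonempty := by
  obtain ⟨a1, a2⟩ := A; obtain ⟨b1, b2⟩ := B
  obtain ⟨c1, c2⟩ := C; obtain ⟨d1, d2⟩ := D
  simp only [det2, Prod.fst_sub, Prod.snd_sub] at h1 h2 h3 h4
  set Δ : ℝ := (b1 - a1) * (d2 - c2) - (b2 - a2) * (d1 - c1) with hΔdef
  have hΔ : Δ = ((b1 - a1) * (d2 - a2) - (b2 - a2) * (d1 - a1))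
      + ((c1 - a1) * (b2 - a2) - (c2 - a2) * (b1 - a1)) := by ring
  have hΔpos : 0 < Δ := by rw [hΔ]; linarith
  set s : ℝ := ((c1 - a1) * (d2 - a2) - (c2 - a2) * (d1 - a1)) / Δ with hs
  set t : ℝ := ((c1 - a1) * (b2 - a2) - (c2 - a2) * (b1 - a1)) / Δ with ht
  have hs0 : 0 < s := div_pos h4 hΔpos
  have hs1 : s < 1 := by
    rw [hs, div_lt_one hΔpos, hΔ]
    have : ((b1 - c1) * (d2 - c2) - (b2 - c2) * (d1 - c1)) =
        (((b1 - a1) * (d2 - a2) - (b2 - a2) * (d1 - a1))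
        + ((c1 - a1) * (b2 - a2) - (c2 - a2) * (b1 - a1)))
        - ((c1 - a1) * (d2 - a2) - (c2 - a2) * (d1 - a1)) := by ring
    linarith [this ▸ h2]
  have ht0 : 0 < t := div_pos h1 hΔpos
  have ht1 : t < 1 := by
    rw [ht, div_lt_one hΔpos, hΔ]; linarith
  refine ⟨(1 - s) • (a1, a2) + s • (b1, b2), ⟨1 - s, s, by linarith, le_of_lt hs0, by ring, rfl⟩,
    ⟨1 - t, t, by linarith, le_of_lt ht0, by ring, ?_⟩⟩
  have hΔne : Δ ≠ 0 := ne_of_gt hΔpos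
  refine Prod.ext ?_ ?_ <;>
    simp only [Prod.smul_mk, smul_eq_mul, Prod.mk_add_mk, Prod.fst_add, Prod.snd_add,
      Prod.smul_fst, Prod.smul_snd, hs, ht] <;>
    field_simp <;> ring

/-! ### Walk lemmas -/

open SimpleGraph

lemma walk_iff {V : Type*} {G : SimpleGraph V} {x y : V} (W : G.Walk x y) (P : V → Prop)
    (h : ∀ z w : V, s(z, w) ∈ W.edges → (P z ↔ P w)) : P x ↔ P y := by
  induction W with
  | nil => exact Iff.rfl
  | cons h' q ih =>
    exact (h _ _ (by simp)).trans (ih fun z w hzw => h z w (by simp [hzw]))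

lemma exists_bad_edge {V : Type*} {G : SimpleGraph V} {x y : V} (W : G.Walk x y) (P : V → Prop)
    (hxy : ¬(P x ↔ P y)) : ∃ z w : V, s(z, w) ∈ W.edges ∧ P z ∧ ¬ P w := by
  by_contra hc
  push_neg at hc
  refine hxy (walk_iff W P fun z w hzw => ?_)
  have h1 := hc z w hzw
  have h2 := hc w z (by rwa [Sym2.eq_swap])
  tauto

section
variable {n : ℕ} {T : SimpleGraph (Fin n)} {u v : Fin n}

lemma reach_split_aux (huv : T.Adj u v) : ∀ {w : Fin n} (_ : T.Walk w u),
    (T.deleteEdges {s(u, v)}).Reachable u w ∨ (T.deleteEdges {s(u, v)}).Reachable v w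
  | _, Walk.nil => Or.inl (Reachable.refl u)
  | w, Walk.cons (v := b) hadj q => by
    by_cases he : s(w, b) = s(u, v)
    · rw [Sym2.eq_iff] at he
      rcases he with ⟨rfl, rfl⟩ | ⟨rfl, rfl⟩
      · exact Or.inl (Reachable.refl _)
      · exact Or.inr (Reachable.refl _)
    · have hadj' : (T.deleteEdges {s(u, v)}).Adj w b := by
        rw [deleteEdges_adj]; exact ⟨hadj, by simpa using he⟩
      rcases reach_split_aux huv q with h | h
      · exact Or.inl (h.trans hadj'.reachable.symm)
      · exact Or.inr (h.trans hadj'.reachable.symm)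

/-- every vertex is reachable from u or v after deleting edge uv, if T connected -/
lemma reach_split (hT : T.Connected) (huv : T.Adj u v) (w : Fin n) :
    (T.deleteEdges {s(u, v)}).Reachable u w ∨ (T.deleteEdges {s(u, v)}).Reachable v w := by
  obtain ⟨W⟩ := hT w u
  exact reach_split_aux huv W

lemma not_reach_uv (hT : T.IsTree) (huv : T.Adj u v) :
    ¬ (T.deleteEdges {s(u, v)}).Reachable u v := by
  intro hR
  obtain ⟨W⟩ := hR
  set P := W.reverse.toPath with hP
  have hW : (P : (T.deleteEdges {s(u,v)}).Walk v u).IsPath := P.2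
  have hsub : ∀ e ∈ (P : (T.deleteEdges {s(u,v)}).Walk v u).edges, e ∈ T.edgeSet := by
    intro e he
    have := Walk.edges_subset_edgeSet _ he
    rw [edgeSet_deleteEdges] at this
    exact this.1
  set Q := (P : (T.deleteEdges {s(u,v)}).Walk v u).transfer T hsub with hQ
  have hQP : Q.IsPath := Walk.IsPath.transfer _ hW
  have hedge : s(u, v) ∉ Q.edges := by
    rw [hQ, Walk.edges_transfer]
    intro hmem
    have h2 := Walk.edges_subset_edgeSet _ hmem
    rw [edgeSet_deleteEdges] at h2
    exact h2.2 rfl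
  exact hT.IsAcyclic (Walk.cons huv Q) ((Walk.cons_isCycle_iff Q huv).2 ⟨hQP, hedge⟩)
end

/-! ### Core crossing argument -/

section
variable {n : ℕ} {p : Fin n → ℝ × ℝ} {T : SimpleGraph (Fin n)}

/-- interleaved chords of a convex polygon, both edges: contradiction -/
lemma cross_core (hp : CCWConvex p) (hdraw : NoncrossingDrawing T p)
    {i j k l : Fin n} (hij : i < j) (hjk : j < k) (hkl : k < l)
    (h1 : T.Adj i k) (h2 : T.Adj j l) : False := by
  have hne : s(i, k) ≠ s(j, l) := by
    intro h
    rw [Sym2.eq_iff] at h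
    rcases h with ⟨rfl, rfl⟩ | ⟨rfl, rfl⟩ <;> simp only [Fin.lt_def] at hij hjk hkl <;> omega
  obtain ⟨E, hE⟩ := seg_inter_of_pos (hp i j k hij hjk) (hp j k l hjk hkl)
    (hp i k l (hij.trans hjk) hkl) (hp i j l hij (hjk.trans hkl))
  have := hdraw i k j l h1 h2 hne hE
  obtain ⟨t, ⟨ht1, ht2⟩, -⟩ := this
  simp only [Set.mem_insert_iff, Set.mem_singleton_iff] at ht1 ht2
  rcases ht1 with rfl | rfl <;> rcases ht2 with rfl | rfl <;>
    simp only [Fin.lt_def] at hij hjk hkl <;> omega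

/-- chord {z,w} (a T-edge, z<w) separating the endpoints of a walk whose support
avoids z, w: contradiction -/
lemma stage2 (hp : CCWConvex p) (hdraw : NoncrossingDrawing T p)
    {G : SimpleGraph (Fin n)} (hle : G ≤ T)
    {z w c d : Fin n} (hzw : T.Adj z w) (hzw' : (z : ℕ) < w)
    (W2 : G.Walk c d)
    (hz : z ∉ W2.support) (hw : w ∉ W2.support)
    (hsep : ¬ (((z:ℕ) < c ∧ (c:ℕ) < w) ↔ ((z:ℕ) < d ∧ (d:ℕ) < w))) : False := by
  obtain ⟨x, y, hmem, hPx, hPy⟩ :=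
    exists_bad_edge W2 (fun t => (z:ℕ) < t ∧ (t:ℕ) < w) hsep
  have hxs := W2.fst_mem_support_of_mem_edges hmem
  have hys := W2.snd_mem_support_of_mem_edges hmem
  have hxy : T.Adj x y := hle (W2.adj_of_mem_edges hmem)
  have hxz : x ≠ z := fun h => hz (h ▸ hxs)
  have hxw : x ≠ w := fun h => hw (h ▸ hxs)
  have hyz : y ≠ z := fun h => hz (h ▸ hys)
  have hyw : y ≠ w := fun h => hw (h ▸ hys)
  rw [← Fin.val_ne_iff] at hxz hxw hyz hyw
  rcases lt_or_gt_of_ne (a := (y:ℕ)) (b := z) (by omega) with hy1 | hy2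
  · -- y < z < x < w : chords {y,x} and {z,w}
    exact cross_core hp hdraw (i := y) (j := z) (k := x) (l := w)
      (by rwa [Fin.lt_def]) (by rw [Fin.lt_def]; omega) (by rw [Fin.lt_def]; omega)
      hxy.symm hzw
  · have hy3 : (w:ℕ) < y := by omega
    -- z < x < w < y : chords {z,w} and {x,y}
    exact cross_core hp hdraw (i := z) (j := x) (k := w) (l := y)
      (by rw [Fin.lt_def]; omega) (by rw [Fin.lt_def]; omega) (by rwa [Fin.lt_def])
      hzw hxy

/-- Two vertex-disjoint walks in a subgraph of `T` joining interleaved pairs of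
vertices: contradiction. -/
lemma core (hp : CCWConvex p) (hdraw : NoncrossingDrawing T p)
    {G : SimpleGraph (Fin n)} (hle : G ≤ T)
    {a b c d : Fin n} (W1 : G.Walk a b) (W2 : G.Walk c d)
    (hdisj : ∀ x, x ∈ W1.support → x ∉ W2.support)
    (hac : (a:ℕ) < c) (hcb : (c:ℕ) < b) (hbd : (b:ℕ) < d) : False := by
  obtain ⟨z, w, hmem, hPz, hPw⟩ :=
    exists_bad_edge W1 (fun t => (c:ℕ) < t ∧ (t:ℕ) < d)
      (by intro h; rw [iff_iff_implies_and_implies] at h; omega)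
  have hzs := W1.fst_mem_support_of_mem_edges hmem
  have hws := W1.snd_mem_support_of_mem_edges hmem
  have hzw : T.Adj z w := hle (W1.adj_of_mem_edges hmem)
  have hcs : c ∈ W2.support := W2.start_mem_support
  have hds : d ∈ W2.support := W2.end_mem_support
  have hzc : (z:ℕ) ≠ c := Fin.val_ne_iff.2 fun h => hdisj z hzs (h ▸ hcs)
  have hzd : (z:ℕ) ≠ d := Fin.val_ne_iff.2 fun h => hdisj z hzs (h ▸ hds)
  have hwc : (w:ℕ) ≠ c := Fin.val_ne_iff.2 fun h => hdisj w hws (h ▸ hcs)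
  have hwd : (w:ℕ) ≠ d := Fin.val_ne_iff.2 fun h => hdisj w hws (h ▸ hds)
  have hznw : (z:ℕ) ≠ w := Fin.val_ne_iff.2 (W1.adj_of_mem_edges hmem).ne
  rcases lt_or_gt_of_ne hznw with h | h
  · exact stage2 hp hdraw hle hzw h W2 (fun hh => hdisj z hzs hh) (fun hh => hdisj w hws hh)
      (by intro hiff; rw [iff_iff_implies_and_implies] at hiff; omega)
  · exact stage2 hp hdraw hle hzw.symm h W2 (fun hh => hdisj w hws hh) (fun hh => hdisj z hzs hh)
      (by intro hiff; rw [iff_iff_implies_and_implies] at hiff; omega)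
end

/-! ### Arc characterization -/

lemma interval_isArc {n : ℕ} (A : Set (Fin n)) (l r : Fin n) (hlr : (l:ℕ) ≤ r)
    (key : ∀ x : Fin n, x ∈ A ↔ (l:ℕ) ≤ x ∧ (x:ℕ) ≤ r) : IsArc A := by
  refine ⟨(l:ℕ), (r:ℕ) - l + 1, by have := r.isLt; omega, fun x => ?_⟩
  rw [key]
  constructor
  · rintro ⟨hx1, hx2⟩
    refine ⟨(x:ℕ) - l, by omega, ?_⟩
    rw [Nat.mod_eq_of_lt (by have := x.isLt; omega)]
    omega
  · rintro ⟨ρ, hρ, hx⟩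
    rw [Nat.mod_eq_of_lt (by have := r.isLt; omega)] at hx
    omega

lemma cointerval_isArc {n : ℕ} (A : Set (Fin n)) (l r : Fin n) (hlr : (l:ℕ) ≤ r)
    (key : ∀ x : Fin n, x ∈ A ↔ ((x:ℕ) < l ∨ (r:ℕ) < x)) : IsArc A := by
  have hrn := r.isLt
  refine ⟨(r:ℕ) + 1, n - ((r:ℕ) - l + 1), by omega, fun x => ?_⟩
  rw [key]
  have hxn := x.isLt
  constructor
  · rintro (hx | hx)
    · refine ⟨n - r - 1 + x, by omega, ?_⟩
      have : (r:ℕ) + 1 + (n - r - 1 + x) = n + x := by omega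
      rw [this, Nat.add_mod_left, Nat.mod_eq_of_lt hxn]
    · refine ⟨(x:ℕ) - r - 1, by omega, ?_⟩
      rw [Nat.mod_eq_of_lt (by omega)]
      omega
  · rintro ⟨ρ, hρ, hx⟩
    by_cases hc : (r:ℕ) + 1 + ρ < n
    · rw [Nat.mod_eq_of_lt hc] at hx
      omega
    · have h2 : ((r:ℕ) + 1 + ρ) % n = (r:ℕ) + 1 + ρ - n := by
        rw [Nat.mod_eq_sub_mod (by omega), Nat.mod_eq_of_lt (by omega)]
      rw [h2] at hx
      omega

lemma isArc_of_no_alt {n : ℕ} (A : Set (Fin n))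
    (h1 : ∀ a c b d : Fin n, (a:ℕ) < c → (c:ℕ) < b → (b:ℕ) < d →
        a ∈ A → c ∉ A → b ∈ A → d ∉ A → False)
    (h2 : ∀ a c b d : Fin n, (a:ℕ) < c → (c:ℕ) < b → (b:ℕ) < d →
        a ∉ A → c ∈ A → b ∉ A → d ∈ A → False) : IsArc A := by
  classical
  by_cases hconv : ∀ x y z : Fin n, (x:ℕ) < y → (y:ℕ) < z → x ∈ A → z ∈ A → y ∈ A
  · by_cases hA : A = ∅
    · exact ⟨0, 0, Nat.zero_le n, fun x => by simp [hA]⟩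
    · obtain ⟨x₀, hx₀⟩ := Set.nonempty_iff_ne_empty.2 hA
      set F : Finset (Fin n) := Finset.univ.filter (· ∈ A) with hF
      have hFne : F.Nonempty := ⟨x₀, by simp [hF, hx₀]⟩
      set l := F.min' hFne
      set r := F.max' hFne
      have hlA : l ∈ A := by have := F.min'_mem hFne; simpa [hF] using this
      have hrA : r ∈ A := by have := F.max'_mem hFne; simpa [hF] using this
      have hlr : (l:ℕ) ≤ r := F.min'_le r (by simp [hF, hrA])
      refine interval_isArc A l r hlr fun x => ⟨fun hx => ?_, fun ⟨hx1, hx2⟩ => ?_⟩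
      · exact ⟨F.min'_le x (by simp [hF, hx]), F.le_max' x (by simp [hF, hx])⟩
      · rcases eq_or_lt_of_le hx1 with he | hlt
        · rwa [show x = l from Fin.val_injective he.symm]
        rcases eq_or_lt_of_le hx2 with he | hlt2
        · rwa [show x = r from Fin.val_injective he]
        exact hconv l x r hlt hlt2 hlA hrA
  · push_neg at hconv
    obtain ⟨x, y, z, hxy, hyz, hxA, hzA, hyA⟩ := hconv
    have low : ∀ d : Fin n, (d:ℕ) < x → d ∈ A := by
      intro d hd
      by_contra hdA
      exact h2 d x y z hd hxy hyz hdA hxA hyA hzA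
    have high : ∀ d : Fin n, (z:ℕ) < d → d ∈ A := by
      intro d hd
      by_contra hdA
      exact h1 x y z d hxy hyz hd hxA hyA hzA hdA
    have Bconv : ∀ a b c : Fin n, (a:ℕ) < b → (b:ℕ) < c → a ∉ A → c ∉ A → b ∉ A := by
      intro a b c hab hbc ha hc hb
      have hxa : (x:ℕ) < a := by
        rcases lt_trichotomy ((a:ℕ)) x with h | h | h
        · exact absurd (low a h) ha
        · exact absurd (Fin.val_injective h ▸ hxA) ha
        · exact h
      have hcz : (c:ℕ) < z := by
        rcases lt_trichotomy ((c:ℕ)) z with h | h | h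
        · exact h
        · exact absurd (Fin.val_injective h ▸ hzA) hc
        · exact absurd (high c h) hc
      exact h1 x a b c hxa hab hbc hxA ha hb hc
    set F : Finset (Fin n) := Finset.univ.filter (· ∉ A) with hF
    have hFne : F.Nonempty := ⟨y, by simp [hF, hyA]⟩
    set l := F.min' hFne
    set r := F.max' hFne
    have hlA : l ∉ A := by have := F.min'_mem hFne; simpa [hF] using this
    have hrA : r ∉ A := by have := F.max'_mem hFne; simpa [hF] using this
    have hlr : (l:ℕ) ≤ r := F.min'_le r (by simp [hF, hrA])
    refine cointerval_isArc A l r hlr fun t => ?_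
    constructor
    · intro ht
      by_contra hc
      push_neg at hc
      obtain ⟨hc1, hc2⟩ := hc
      rcases eq_or_lt_of_le hc1 with he | hlt
      · exact (Fin.val_injective he ▸ hlA) ht
      rcases eq_or_lt_of_le hc2 with he | hlt2
      · exact (Fin.val_injective he ▸ hrA) ht
      exact Bconv l t r hlt hlt2 hlA hrA ht
    · intro ht
      by_contra htA
      have hl' : (l:ℕ) ≤ t := F.min'_le t (by simp [hF, htA])
      have hr' : (t:ℕ) ≤ r := F.le_max' t (by simp [hF, htA])
      omega

lemma walk_reach {V : Type*} [DecidableEq V] {G : SimpleGraph V} {r a b : V}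
    (ha : G.Reachable r a) (hb : G.Reachable r b) :
    ∃ W : G.Walk a b, ∀ t ∈ W.support, G.Reachable r t := by
  obtain ⟨W⟩ := ha.symm.trans hb
  exact ⟨W, fun t ht => ha.trans (W.takeUntil t ht).reachable⟩

theorem tree_component_is_arc {n : ℕ} (hn : 2 ≤ n)
    (p : Fin n → ℝ × ℝ) (hp : CCWConvex p)
    (T : SimpleGraph (Fin n)) (hT : T.IsTree)
    (hdraw : NoncrossingDrawing T p)
    (u v : Fin n) (huv : T.Adj u v) :
    IsArc {w : Fin n | (T.deleteEdges {s(u, v)}).Reachable u w} := by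
  classical
  set T' := T.deleteEdges {s(u, v)} with hT'
  set S : Set (Fin n) := {w : Fin n | T'.Reachable u w} with hS
  have hle : T' ≤ T := deleteEdges_le _
  have hnr : ¬ T'.Reachable u v := not_reach_uv hT huv
  have hv : ∀ w : Fin n, w ∉ S → T'.Reachable v w := by
    intro w hw
    rcases reach_split hT.isConnected huv w with h | h
    · exact absurd h hw
    · exact h
  have hvS : ∀ w : Fin n, T'.Reachable v w → w ∉ S := by
    intro w h hwS
    exact hnr (hwS.trans h.symm)
  refine isArc_of_no_alt S ?_ ?_
  · intro a c b d hac hcb hbd ha hc hb hd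
    obtain ⟨W1, hW1⟩ := walk_reach (ha : T'.Reachable u a) (hb : T'.Reachable u b)
    obtain ⟨W2, hW2⟩ := walk_reach (hv c hc) (hv d hd)
    exact core hp hdraw hle W1 W2 (fun t ht1 ht2 => hvS t (hW2 t ht2) (hW1 t ht1)) hac hcb hbd
  · intro a c b d hac hcb hbd ha hc hb hd
    obtain ⟨W1, hW1⟩ := walk_reach (hv a ha) (hv b hb)
    obtain ⟨W2, hW2⟩ := walk_reach (hc : T'.Reachable u c) (hd : T'.Reachable u d)
    exact core hp hdraw hle W1 W2 (fun t ht1 ht2 => hvS t (hW1 t ht1) (hW2 t ht2)) hac hcb hbd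
end

section
/- Let n ≥ 3, let p : Fin n → ℝ² be in counterclockwise convex position, and let σ : Fin n → Fin n be a bijection whose spanning path on p is noncrossing. Fix a position k with 0 ≤ k ≤ n−1 and delete the vertex p(σ k) from the path, joining its two neighbors (if 0 < k < n−1, the edges [p(σ (k−1)), p(σ k)] and [p(σ k), p(σ (k+1))] are replaced by the single edge [p(σ (k−1)), p(σ (k+1))]; if k = 0 or k = n−1 the incident edge is simply removed). Then the resulting path on the remaining n−1 points, visiting p(σ 0), …, p(σ (k−1)), p(σ (k+1)), …, p(σ (n−1)) in this order, is noncrossing. -/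
set_option maxHeartbeats 2000000

/-- Cyclic (counterclockwise) order predicate on natural numbers. -/
def Ccw (i j k : ℕ) : Prop := (i < j ∧ j < k) ∨ (j < k ∧ k < i) ∨ (k < i ∧ i < j)

lemma chord_combo {a m b c d : ℕ}
    (ham : a ≠ m) (hab : a ≠ b) (hmb : m ≠ b)
    (hca : c ≠ a) (hcm : c ≠ m) (hcb : c ≠ b)
    (hda : d ≠ a) (hdm : d ≠ m) (hdb : d ≠ b) (hcd : c ≠ d)
    (h1 : ¬((Ccw a m c ↔ ¬Ccw a m d) ∧ (Ccw c d a ↔ ¬Ccw c d m)))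
    (h2 : ¬((Ccw m b c ↔ ¬Ccw m b d) ∧ (Ccw c d m ↔ ¬Ccw c d b))) :
    ¬((Ccw a b c ↔ ¬Ccw a b d) ∧ (Ccw c d a ↔ ¬Ccw c d b)) := by
  unfold Ccw at *; omega

lemma det2_cyc (A B C : ℝ×ℝ) : det2 (B-A) (C-A) = det2 (C-B) (A-B) := by simp [det2]; ring
lemma det2_swap23 (A B C : ℝ×ℝ) : det2 (B-A) (C-A) = - det2 (C-A) (B-A) := by simp [det2]; ring
lemma det2_smul (t : ℝ) (u v : ℝ×ℝ) : det2 u (t • v) = t * det2 u v := by simp [det2]; ring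
lemma det2_self (u : ℝ×ℝ) : det2 u u = 0 := by simp [det2]; ring

lemma ccw_iff {n : ℕ} {p : Fin n → ℝ × ℝ} (hp : CCWConvex p) {i j k : Fin n}
    (hij : i ≠ j) (hik : i ≠ k) (hjk : j ≠ k) :
    (0 < det2 (p j - p i) (p k - p i) ↔ Ccw ↑i ↑j ↑k) := by
  have hij' := hij; have hik' := hik; have hjk' := hjk
  rw [Ne, Fin.ext_iff] at hij' hik' hjk'
  rcases Nat.lt_trichotomy (i:ℕ) j with h1 | h1 | h1 <;>
  rcases Nat.lt_trichotomy (j:ℕ) k with h2 | h2 | h2 <;>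
  rcases Nat.lt_trichotomy (i:ℕ) k with h3 | h3 | h3 <;>
  first
  | omega
  | (apply iff_of_true ?_ (by unfold Ccw; omega)
     first
     | exact hp i j k h1 h2
     | (rw [det2_cyc]; exact hp j k i h2 h3)
     | (rw [det2_cyc, det2_cyc]; exact hp k i j h3 h1))
  | (apply iff_of_false ?_ (by unfold Ccw; omega)
     rw [not_lt]
     first
     | (have := hp i k j h3 h2; rw [det2_swap23] at this; linarith)
     | (have := hp j i k h1 h3; rw [det2_cyc, det2_swap23] at this; linarith)
     | (have := hp k j i h2 h1; rw [det2_cyc, det2_cyc, det2_swap23] at this; linarith))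

lemma det_ne {n : ℕ} {p : Fin n → ℝ × ℝ} (hp : CCWConvex p) {i j k : Fin n}
    (hij : i ≠ j) (hik : i ≠ k) (hjk : j ≠ k) :
    det2 (p j - p i) (p k - p i) ≠ 0 := by
  intro h0
  have h1 := ccw_iff hp hij hik hjk
  have h2 := ccw_iff hp hik hij (Ne.symm hjk)
  rw [det2_swap23] at h2
  have hij' : (i:ℕ) ≠ j := fun h => hij (Fin.ext h)
  have hik' : (i:ℕ) ≠ k := fun h => hik (Fin.ext h)
  have hjk' : (j:ℕ) ≠ k := fun h => hjk (Fin.ext h)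
  have : ¬ Ccw ↑i ↑j ↑k := fun hc => by rw [← h1] at hc; linarith
  have : ¬ Ccw ↑i ↑k ↑j := fun hc => by rw [← h2] at hc; linarith
  unfold Ccw at *; omega

lemma mem_seg_iff {A B x : ℝ×ℝ} :
    x ∈ segment ℝ A B ↔ ∃ t ∈ Set.Icc (0:ℝ) 1, x = A + t • (B - A) := by
  rw [segment_eq_image']; simp [eq_comm]

lemma sep_of_mem {A B C D x : ℝ×ℝ}
    (hC : det2 (B-A) (C-A) ≠ 0) (hD : det2 (B-A) (D-A) ≠ 0)
    (hx1 : x ∈ segment ℝ A B) (hx2 : x ∈ segment ℝ C D) :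
    det2 (B-A) (C-A) * det2 (B-A) (D-A) < 0 := by
  obtain ⟨t, ht, rfl⟩ := mem_seg_iff.mp hx1
  obtain ⟨s, hs, hsx⟩ := mem_seg_iff.mp hx2
  have e1 : det2 (B-A) (A + t • (B-A) - A) = 0 := by
    rw [show A + t • (B-A) - A = t • (B-A) by module, det2_smul, det2_self]; ring
  have e2 : det2 (B-A) (A + t • (B-A) - A)
      = (1-s) * det2 (B-A) (C-A) + s * det2 (B-A) (D-A) := by
    rw [hsx, show C + s • (D-C) - A = (1-s) • (C-A) + s • (D-A) by module]
    rw [show det2 (B-A) ((1-s) • (C-A) + s • (D-A))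
        = (1-s) * det2 (B-A) (C-A) + s * det2 (B-A) (D-A) by simp [det2]; ring]
  rw [e1] at e2
  rcases hC.lt_or_gt with h | h <;> rcases hD.lt_or_gt with h' | h'
  · exfalso
    rcases eq_or_lt_of_le hs.1 with hs0 | hs0
    · rw [← hs0] at e2; simp at e2; linarith
    · nlinarith [mul_pos hs0 (show (0:ℝ) < -det2 (B-A) (D-A) by linarith),
        mul_nonneg (show (0:ℝ) ≤ 1-s by linarith [hs.1, hs.2])
          (show (0:ℝ) ≤ -det2 (B-A) (C-A) by linarith)]
  · exact mul_neg_of_neg_of_pos h h'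
  · nlinarith [h, h']
  · exfalso
    rcases eq_or_lt_of_le hs.1 with hs0 | hs0
    · rw [← hs0] at e2; simp at e2; linarith
    · nlinarith [mul_pos hs0 (show (0:ℝ) < det2 (B-A) (D-A) by linarith),
        mul_nonneg (show (0:ℝ) ≤ 1-s by linarith [hs.1, hs.2])
          (show (0:ℝ) ≤ det2 (B-A) (C-A) by linarith)]

lemma det2_eq_zero_ex {w v : ℝ×ℝ} (hw : w ≠ 0) (h : det2 w v = 0) : ∃ u : ℝ, v = u • w := by
  rcases (by rwa [Ne, Prod.ext_iff, not_and_or] at hw : w.1 ≠ 0 ∨ w.2 ≠ 0) with h1 | h1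
  · refine ⟨v.1 / w.1, ?_⟩
    have : v.2 = w.2 * v.1 / w.1 := by
      field_simp; simp [det2] at h; linarith
    rw [Prod.ext_iff]; constructor
    · simp; field_simp
    · simp [this]; field_simp
  · refine ⟨v.2 / w.2, ?_⟩
    have : v.1 = w.1 * v.2 / w.2 := by
      field_simp; simp [det2] at h; linarith
    rw [Prod.ext_iff]; constructor
    · simp [this]; field_simp
    · simp; field_simp

lemma nonempty_inter_of_sep {A B C D : ℝ×ℝ}
    (h1 : det2 (B-A) (C-A) * det2 (B-A) (D-A) < 0)
    (h2 : det2 (D-C) (A-C) * det2 (D-C) (B-C) < 0) :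
    (segment ℝ A B ∩ segment ℝ C D).Nonempty := by
  set fC := det2 (B-A) (C-A) with hfC
  set fD := det2 (B-A) (D-A) with hfD
  set gA := det2 (D-C) (A-C) with hgA
  set gB := det2 (D-C) (B-C) with hgB
  have hfCD : fC - fD ≠ 0 := by rcases mul_neg_iff.mp h1 with ⟨h,h'⟩|⟨h,h'⟩ <;> intro hc <;> nlinarith
  set s : ℝ := fC / (fC - fD) with hs
  have hmul : s * (fC - fD) = fC := div_mul_cancel₀ fC hfCD
  have hs0 : 0 ≤ s ∧ s ≤ 1 := by
    rcases mul_neg_iff.mp h1 with ⟨h,h'⟩|⟨h,h'⟩ <;>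
      constructor <;> by_contra hc <;> push_neg at hc <;> nlinarith [hmul]
  set x : ℝ×ℝ := C + s • (D - C) with hx
  have hxCD : x ∈ segment ℝ C D := mem_seg_iff.mpr ⟨s, ⟨hs0.1, hs0.2⟩, rfl⟩
  have hfx : det2 (B-A) (x-A) = 0 := by
    have : x - A = (1-s) • (C-A) + s • (D-A) := by rw [hx]; module
    rw [this, show det2 (B-A) ((1-s) • (C-A) + s • (D-A))
        = (1-s) * det2 (B-A) (C-A) + s * det2 (B-A) (D-A) by simp [det2]; ring]
    rw [← hfC, ← hfD, hs]; field_simp; ring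
  have hBA : B - A ≠ 0 := by
    intro hc
    rw [hfC, hc] at h1; simp [det2] at h1
  obtain ⟨u, hu⟩ := det2_eq_zero_ex hBA hfx
  have hgx : det2 (D-C) (x-C) = 0 := by
    rw [show x - C = s • (D-C) by rw [hx]; module, det2_smul, det2_self]; ring
  have hgxu : gA + u * (gB - gA) = 0 := by
    have hxu : x - C = (A - C) + u • ((B-C) - (A-C)) := by
      have : x = A + u • (B - A) := by rw [← hu]; module
      rw [this]; module
    rw [hxu, show det2 (D-C) ((A-C) + u • ((B-C)-(A-C)))
        = det2 (D-C) (A-C) + u * (det2 (D-C) (B-C) - det2 (D-C) (A-C)) by simp [det2]; ring] at hgx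
    rw [← hgA, ← hgB] at hgx; linarith
  have hu0 : 0 ≤ u ∧ u ≤ 1 := by
    rcases mul_neg_iff.mp h2 with ⟨h,h'⟩|⟨h,h'⟩
    · constructor <;> nlinarith
    · constructor <;> nlinarith
  refine ⟨x, mem_seg_iff.mpr ⟨u, ⟨hu0.1, hu0.2⟩, by rw [← hu]; module⟩, hxCD⟩

lemma shared_vertex {X V Y : ℝ×ℝ} (h : det2 (X - V) (Y - V) ≠ 0) :
    segment ℝ X V ∩ segment ℝ V Y = {V} := by
  ext z
  simp only [Set.mem_inter_iff, Set.mem_singleton_iff]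
  constructor
  · rintro ⟨h1, h2⟩
    obtain ⟨t, ht, rfl⟩ := mem_seg_iff.mp h1
    obtain ⟨s, hs, hsz⟩ := mem_seg_iff.mp h2
    have key : (1-t) • (X - V) = s • (Y - V) := by
      have : X + t • (V - X) - V = (1-t) • (X - V) := by module
      rw [← this, hsz]; module
    have : s * det2 (X-V) (Y-V) = 0 := by
      rw [← det2_smul, ← key, det2_smul, det2_self]; ring
    have hs0 : s = 0 := by
      rcases mul_eq_zero.mp this with h' | h'
      · exact h'
      · exact absurd h' h
    rw [hsz, hs0]; simp
  · rintro rfl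
    exact ⟨right_mem_segment _ _ _, left_mem_segment _ _ _⟩

lemma sep_iff {n : ℕ} {p : Fin n → ℝ × ℝ} (hp : CCWConvex p) {i j k l : Fin n}
    (hij : i ≠ j) (hik : i ≠ k) (hil : i ≠ l) (hjk : j ≠ k) (hjl : j ≠ l) :
    det2 (p j - p i) (p k - p i) * det2 (p j - p i) (p l - p i) < 0 ↔
      (Ccw ↑i ↑j ↑k ↔ ¬ Ccw ↑i ↑j ↑l) := by
  have hk0 := det_ne hp hij hik hjk
  have hl0 := det_ne hp hij hil hjl
  rw [← ccw_iff hp hij hik hjk, ← ccw_iff hp hij hil hjl]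
  rcases hk0.lt_or_gt with h | h <;> rcases hl0.lt_or_gt with h' | h'
  · exact iff_of_false (by nlinarith) (by simp [not_lt.mpr h.le, not_lt.mpr h'.le])
  · exact iff_of_true (mul_neg_of_neg_of_pos h h') (by simp [not_lt.mpr h.le, h'])
  · exact iff_of_true (mul_neg_of_pos_of_neg h h') (by simp [h, not_lt.mpr h'.le])
  · exact iff_of_false (by nlinarith) (by simp [h, h'])

lemma disjoint_iff_combo {n : ℕ} {p : Fin n → ℝ × ℝ} (hp : CCWConvex p) {i j k l : Fin n}
    (hij : i ≠ j) (hik : i ≠ k) (hil : i ≠ l) (hjk : j ≠ k) (hjl : j ≠ l) (hkl : k ≠ l) :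
    Disjoint (segment ℝ (p i) (p j)) (segment ℝ (p k) (p l)) ↔
      ¬((Ccw ↑i ↑j ↑k ↔ ¬ Ccw ↑i ↑j ↑l) ∧ (Ccw ↑k ↑l ↑i ↔ ¬ Ccw ↑k ↑l ↑j)) := by
  constructor
  · intro hd hx
    obtain ⟨z, hz1, hz2⟩ := nonempty_inter_of_sep
      ((sep_iff hp hij hik hil hjk hjl).mpr hx.1)
      ((sep_iff hp hkl (Ne.symm hik) (Ne.symm hjk) (Ne.symm hil) (Ne.symm hjl)).mpr hx.2)
    exact Set.disjoint_left.mp hd hz1 hz2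
  · intro hx
    rw [Set.disjoint_left]
    intro z hz1 hz2
    exact hx ⟨(sep_iff hp hij hik hil hjk hjl).mp
        (sep_of_mem (det_ne hp hij hik hjk) (det_ne hp hij hil hjl) hz1 hz2),
      (sep_iff hp hkl (Ne.symm hik) (Ne.symm hjk) (Ne.symm hil) (Ne.symm hjl)).mp
        (sep_of_mem (det_ne hp hkl (Ne.symm hik) (Ne.symm hil))
          (det_ne hp hkl (Ne.symm hjk) (Ne.symm hjl)) hz2 hz1)⟩

lemma cons_case {n : ℕ} {p : Fin n → ℝ×ℝ} (hp : CCWConvex p) {i1 i2 i3 : Fin n}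
    (h12 : i1 ≠ i2) (h13 : i1 ≠ i3) (h23 : i2 ≠ i3) :
    segment ℝ (p i1) (p i2) ∩ segment ℝ (p i2) (p i3) = {p i2} :=
  shared_vertex (det_ne hp (Ne.symm h12) h23 h13)

theorem delete_vertex_noncrossing {n : ℕ} (hn : 3 ≤ n)
    (p : Fin n → ℝ × ℝ) (hp : CCWConvex p)
    (σ : Equiv.Perm (Fin n)) (hσ : NoncrossingPath (p ∘ σ))
    (k : ℕ) (hk : k ≤ n - 1) :
    NoncrossingPath (fun j : Fin (n - 1) =>
      p (σ (if h : (j : ℕ) < k then ⟨j, by omega⟩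
            else ⟨(j : ℕ) + 1, by have := j.isLt; omega⟩))) := by
  have hfne : ∀ (a b : ℕ) (ha : a < n) (hb : b < n), a ≠ b → σ ⟨a, ha⟩ ≠ σ ⟨b, hb⟩ := by
    intro a b ha hb hab h
    have := σ.injective h
    rw [Fin.mk.injEq] at this
    exact hab this
  have hvne : ∀ (a b : ℕ) (ha : a < n) (hb : b < n), a ≠ b →
      ((σ ⟨a, ha⟩ : Fin n) : ℕ) ≠ ((σ ⟨b, hb⟩ : Fin n) : ℕ) :=
    fun a b ha hb hab => Fin.val_ne_of_ne (hfne a b ha hb hab)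
  intro t l ht hl htl
  beta_reduce
  rcases eq_or_ne l (t+1) with hc | hc
  · -- consecutive edges: pure geometry
    subst hc
    rw [if_pos rfl]
    by_cases h0 : t < k <;> by_cases h1 : t+1 < k <;> by_cases h2 : t+1+1 < k
    · rw [dif_pos h0, dif_pos h1, dif_pos h2]
      exact cons_case hp (hfne t (t+1) (by omega) (by omega) (by omega))
        (hfne t (t+1+1) (by omega) (by omega) (by omega))
        (hfne (t+1) (t+1+1) (by omega) (by omega) (by omega))
    · rw [dif_pos h0, dif_pos h1, dif_neg h2]
      exact cons_case hp (hfne t (t+1) (by omega) (by omega) (by omega))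
        (hfne t (t+1+1+1) (by omega) (by omega) (by omega))
        (hfne (t+1) (t+1+1+1) (by omega) (by omega) (by omega))
    · omega
    · rw [dif_pos h0, dif_neg h1, dif_neg h2]
      exact cons_case hp (hfne t (t+1+1) (by omega) (by omega) (by omega))
        (hfne t (t+1+1+1) (by omega) (by omega) (by omega))
        (hfne (t+1+1) (t+1+1+1) (by omega) (by omega) (by omega))
    · omega
    · omega
    · omega
    · rw [dif_neg h0, dif_neg h1, dif_neg h2]
      exact cons_case hp (hfne (t+1) (t+1+1) (by omega) (by omega) (by omega))
        (hfne (t+1) (t+1+1+1) (by omega) (by omega) (by omega))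
        (hfne (t+1+1) (t+1+1+1) (by omega) (by omega) (by omega))
  · -- nonconsecutive edges
    rw [if_neg hc]
    have hl2 : t + 2 ≤ l := by omega
    by_cases h1 : t+1 = k
    · -- first edge is the new edge [σ(t), σ(t+2)], second edge is original (l+1, l+2)
      rw [dif_pos (show t < k by omega), dif_neg (show ¬(t+1 < k) by omega),
          dif_neg (show ¬(l < k) by omega), dif_neg (show ¬(l+1 < k) by omega)]
      have hA1 := hσ t (l+1) (by omega) (by omega) (by omega)
      rw [if_neg (show ¬(l+1 = t+1) by omega)] at hA1
      have hA2 := hσ (t+1) (l+1) (by omega) (by omega) (by omega)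
      rw [if_neg (show ¬(l+1 = t+1+1) by omega)] at hA2
      simp only [Function.comp_apply] at hA1 hA2
      refine (disjoint_iff_combo hp
        (hfne t (t+1+1) (by omega) (by omega) (by omega))
        (hfne t (l+1) (by omega) (by omega) (by omega))
        (hfne t (l+1+1) (by omega) (by omega) (by omega))
        (hfne (t+1+1) (l+1) (by omega) (by omega) (by omega))
        (hfne (t+1+1) (l+1+1) (by omega) (by omega) (by omega))
        (hfne (l+1) (l+1+1) (by omega) (by omega) (by omega))).mpr ?_
      exact chord_combo
        (hvne t (t+1) (by omega) (by omega) (by omega))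
        (hvne t (t+1+1) (by omega) (by omega) (by omega))
        (hvne (t+1) (t+1+1) (by omega) (by omega) (by omega))
        (hvne (l+1) t (by omega) (by omega) (by omega))
        (hvne (l+1) (t+1) (by omega) (by omega) (by omega))
        (hvne (l+1) (t+1+1) (by omega) (by omega) (by omega))
        (hvne (l+1+1) t (by omega) (by omega) (by omega))
        (hvne (l+1+1) (t+1) (by omega) (by omega) (by omega))
        (hvne (l+1+1) (t+1+1) (by omega) (by omega) (by omega))
        (hvne (l+1) (l+1+1) (by omega) (by omega) (by omega))
        ((disjoint_iff_combo hp
          (hfne t (t+1) (by omega) (by omega) (by omega))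
          (hfne t (l+1) (by omega) (by omega) (by omega))
          (hfne t (l+1+1) (by omega) (by omega) (by omega))
          (hfne (t+1) (l+1) (by omega) (by omega) (by omega))
          (hfne (t+1) (l+1+1) (by omega) (by omega) (by omega))
          (hfne (l+1) (l+1+1) (by omega) (by omega) (by omega))).mp hA1)
        ((disjoint_iff_combo hp
          (hfne (t+1) (t+1+1) (by omega) (by omega) (by omega))
          (hfne (t+1) (l+1) (by omega) (by omega) (by omega))
          (hfne (t+1) (l+1+1) (by omega) (by omega) (by omega))
          (hfne (t+1+1) (l+1) (by omega) (by omega) (by omega))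
          (hfne (t+1+1) (l+1+1) (by omega) (by omega) (by omega))
          (hfne (l+1) (l+1+1) (by omega) (by omega) (by omega))).mp hA2)
    · by_cases h2 : l+1 = k
      · -- second edge is the new edge [σ(l), σ(l+2)], first is original (t, t+1)
        rw [dif_pos (show t < k by omega), dif_pos (show t+1 < k by omega),
            dif_pos (show l < k by omega), dif_neg (show ¬(l+1 < k) by omega)]
        have hB1 := hσ t l (by omega) (by omega) (by omega)
        rw [if_neg hc] at hB1
        have hB2 := hσ t (l+1) (by omega) (by omega) (by omega)
        rw [if_neg (show ¬(l+1 = t+1) by omega)] at hB2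
        simp only [Function.comp_apply] at hB1 hB2
        refine (disjoint_iff_combo hp
          (hfne t (t+1) (by omega) (by omega) (by omega))
          (hfne t l (by omega) (by omega) (by omega))
          (hfne t (l+1+1) (by omega) (by omega) (by omega))
          (hfne (t+1) l (by omega) (by omega) (by omega))
          (hfne (t+1) (l+1+1) (by omega) (by omega) (by omega))
          (hfne l (l+1+1) (by omega) (by omega) (by omega))).mpr ?_
        intro hh
        refine chord_combo
          (hvne l (l+1) (by omega) (by omega) (by omega))
          (hvne l (l+1+1) (by omega) (by omega) (by omega))
          (hvne (l+1) (l+1+1) (by omega) (by omega) (by omega))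
          (hvne t l (by omega) (by omega) (by omega))
          (hvne t (l+1) (by omega) (by omega) (by omega))
          (hvne t (l+1+1) (by omega) (by omega) (by omega))
          (hvne (t+1) l (by omega) (by omega) (by omega))
          (hvne (t+1) (l+1) (by omega) (by omega) (by omega))
          (hvne (t+1) (l+1+1) (by omega) (by omega) (by omega))
          (hvne t (t+1) (by omega) (by omega) (by omega))
          (fun hx => ?_) (fun hx => ?_) ⟨hh.2, hh.1⟩
        · exact ((disjoint_iff_combo hp
            (hfne t (t+1) (by omega) (by omega) (by omega))
            (hfne t l (by omega) (by omega) (by omega))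
            (hfne t (l+1) (by omega) (by omega) (by omega))
            (hfne (t+1) l (by omega) (by omega) (by omega))
            (hfne (t+1) (l+1) (by omega) (by omega) (by omega))
            (hfne l (l+1) (by omega) (by omega) (by omega))).mp hB1) ⟨hx.2, hx.1⟩
        · exact ((disjoint_iff_combo hp
            (hfne t (t+1) (by omega) (by omega) (by omega))
            (hfne t (l+1) (by omega) (by omega) (by omega))
            (hfne t (l+1+1) (by omega) (by omega) (by omega))
            (hfne (t+1) (l+1) (by omega) (by omega) (by omega))
            (hfne (t+1) (l+1+1) (by omega) (by omega) (by omega))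
            (hfne (l+1) (l+1+1) (by omega) (by omega) (by omega))).mp hB2) ⟨hx.2, hx.1⟩
      · -- neither edge is new: reuse hσ directly
        by_cases ht1 : t+1 < k
        · by_cases hl1 : l < k
          · rw [dif_pos (show t < k by omega), dif_pos ht1,
                dif_pos hl1, dif_pos (show l+1 < k by omega)]
            have := hσ t l (by omega) (by omega) (by omega)
            rw [if_neg hc] at this
            simpa using this
          · rw [dif_pos (show t < k by omega), dif_pos ht1,
                dif_neg hl1, dif_neg (show ¬(l+1 < k) by omega)]
            have := hσ t (l+1) (by omega) (by omega) (by omega)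
            rw [if_neg (show ¬(l+1 = t+1) by omega)] at this
            simpa using this
        · rw [dif_neg (show ¬(t < k) by omega), dif_neg (show ¬(t+1 < k) by omega),
              dif_neg (show ¬(l < k) by omega), dif_neg (show ¬(l+1 < k) by omega)]
          have := hσ (t+1) (l+1) (by omega) (by omega) (by omega)
          rw [if_neg (show ¬(l+1 = t+1+1) by omega)] at this
          simpa using this
end
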